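/- arXiv:2306.16362 — 10 statements merged into one kernel-verified Lean document; each statement's English description precedes it below -/
import Mathlib

section
/- For w ∈ ℂ, the derivative f'(w) = e^{w}·(a·cosh(a·w) + sinh(a·w)) vanishes if and only if there exists k ∈ ℤ such that w = ξ_a + i·kπ/a, where ξ_a = (1/(2a))·ln((1−a)/(1+a)). -/
open Complex Real

theorem stmt_2 (a : ℝ) (ha0 : 0 < a) (ha1 : a < 1)
    (f : ℂ → ℂ) (hf : ∀ w : ℂ, f w = Complex.sinh (a * w) * Complex.exp w)
    (ξa : ℝ) (hξa : ξa = (1 / (2 * a)) * Real.log ((1 - a) / (1 + a))) :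
    ∀ w : ℂ,
      Complex.exp w * (a * Complex.cosh (a * w) + Complex.sinh (a * w)) = 0 ↔
        ∃ k : ℤ, w = (ξa : ℂ) + Complex.I * (k * Real.pi / a) := by
  intro w
  have haC : (a : ℂ) ≠ 0 := Complex.ofReal_ne_zero.mpr ha0.ne'
  have h1 : (0:ℝ) < 1 - a := by linarith
  have h2 : (0:ℝ) < 1 + a := by linarith
  have hr : (0:ℝ) < (1 - a) / (1 + a) := div_pos h1 h2
  have hE : Complex.exp (a * w) ≠ 0 := Complex.exp_ne_zero _
  have ha1C : (a : ℂ) + 1 ≠ 0 := by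
    intro h
    have := congrArg Complex.re h
    simp at this; linarith
  have key : Complex.exp w * (a * Complex.cosh (a * w) + Complex.sinh (a * w)) = 0 ↔
      Complex.exp (2 * (a * w)) = (((1 - a) / (1 + a) : ℝ) : ℂ) := by
    rw [mul_eq_zero, or_iff_right (Complex.exp_ne_zero w)]
    have hc : Complex.cosh (a * w) = (Complex.exp (a*w) + Complex.exp (-(a*w))) / 2 := by
      rw [eq_div_iff (two_ne_zero (α := ℂ)), mul_comm, Complex.two_cosh]
    have hs : Complex.sinh (a * w) = (Complex.exp (a*w) - Complex.exp (-(a*w))) / 2 := by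
      rw [eq_div_iff (two_ne_zero (α := ℂ)), mul_comm, Complex.two_sinh]
    rw [hc, hs, Complex.exp_neg, two_mul, Complex.exp_add]
    push_cast
    rw [eq_div_iff (show (1:ℂ) + a ≠ 0 by intro h; apply ha1C; linear_combination h)]
    constructor
    · intro h
      field_simp at h
      ring_nf
      ring_nf at h
      linear_combination h
    · intro h
      field_simp
      linear_combination h
  rw [key]
  have hlog : (((1 - a) / (1 + a) : ℝ) : ℂ) = Complex.exp ((Real.log ((1-a)/(1+a)) : ℝ) : ℂ) := by
    rw [← Complex.ofReal_exp, Real.exp_log hr]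
  rw [hlog, Complex.exp_eq_exp_iff_exists_int]
  have hx : (ξa : ℂ) = 1 / (2 * a) * (Real.log ((1-a)/(1+a)) : ℂ) := by
    rw [hξa]; push_cast; ring
  constructor
  · rintro ⟨n, hn⟩
    refine ⟨n, ?_⟩
    have : w = ((Real.log ((1-a)/(1+a)) : ℂ) + n * (2 * π * I)) / (2 * a) := by
      field_simp
      linear_combination hn
    rw [this, hx]
    push_cast
    field_simp
  · rintro ⟨n, hn⟩
    refine ⟨n, ?_⟩
    rw [hn, hx]
    push_cast
    field_simp
end

section
/- For every k ∈ ℤ, the value of f at the critical point w_k = ξ_a + i·kπ/a equals f(w_k) = x_a·(−1)^k·(cos(kπ/a) + i·sin(kπ/a)), where ξ_a = (1/(2a))·ln((1−a)/(1+a)) and x_a = −(a/(1+a))·((1−a)/(1+a))^{(1−a)/(2a)}. -/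
open Complex Real

theorem stmt_3 (a : ℝ) (ha0 : 0 < a) (ha1 : a < 1)
    (f : ℂ → ℂ) (hf : ∀ w : ℂ, f w = Complex.sinh (a * w) * Complex.exp w)
    (ξa : ℝ) (hξa : ξa = (1 / (2 * a)) * Real.log ((1 - a) / (1 + a)))
    (xa : ℝ) (hxa : xa = -(a / (1 + a)) * ((1 - a) / (1 + a)) ^ ((1 - a) / (2 * a))) :
    ∀ k : ℤ,
      f ((ξa : ℂ) + Complex.I * (k * Real.pi / a)) =
        (xa : ℂ) * (-1) ^ k *
          (Real.cos (k * Real.pi / a) + Complex.I * Real.sin (k * Real.pi / a)) := by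
  intro k
  have hane : (a:ℝ) ≠ 0 := ne_of_gt ha0
  have h1a : (0:ℝ) < 1 + a := by linarith
  have h1a' : (0:ℝ) < 1 - a := by linarith
  set r : ℝ := (1 - a) / (1 + a) with hrdef
  have hrpos : 0 < r := div_pos h1a' h1a
  set θ : ℝ := (k:ℝ) * Real.pi / a with hθ
  -- real key identity
  have key : Real.sinh (a * ξa) * Real.exp ξa = xa := by
    have haξ : a * ξa = (1/2) * Real.log r := by
      rw [hξa]; field_simp
    have hexpξ : Real.exp ξa = r ^ (1/(2*a) : ℝ) := by
      rw [hξa, Real.rpow_def_of_pos hrpos, mul_comm]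
    have e1 : Real.exp ((1/2) * Real.log r) = r ^ (1/2 : ℝ) := by
      rw [Real.rpow_def_of_pos hrpos, mul_comm]
    have e2 : Real.exp (-((1/2) * Real.log r)) = r ^ (-(1/2) : ℝ) := by
      rw [Real.rpow_def_of_pos hrpos]; ring_nf
    have hsinh : Real.sinh (a * ξa) = (r ^ (1/2:ℝ) - r ^ (-(1/2):ℝ))/2 := by
      rw [haξ, Real.sinh_eq, e1, e2]
    rw [hsinh, hexpξ, hxa]
    have h1 : r ^ (1/2:ℝ) * r ^ (1/(2*a):ℝ) = r * r ^ ((1-a)/(2*a) : ℝ) := by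
      rw [← Real.rpow_add hrpos, ← Real.rpow_one_add' (le_of_lt hrpos)]
      · congr 1; field_simp; ring
      · intro h; exact absurd h (by positivity)
    have h2 : r ^ (-(1/2):ℝ) * r ^ (1/(2*a):ℝ) = r ^ ((1-a)/(2*a) : ℝ) := by
      rw [← Real.rpow_add hrpos]
      congr 1; field_simp; ring
    have hr1 : (r - 1)/2 = -(a/(1+a)) := by
      rw [hrdef]; field_simp; ring
    calc (r ^ (1/2:ℝ) - r ^ (-(1/2):ℝ))/2 * r ^ (1/(2*a):ℝ)
        = (r ^ (1/2:ℝ) * r ^ (1/(2*a):ℝ) - r ^ (-(1/2):ℝ) * r ^ (1/(2*a):ℝ))/2 := by ring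
      _ = ((r - 1)/2) * r ^ ((1-a)/(2*a) : ℝ) := by rw [h1, h2]; ring
      _ = -(a/(1+a)) * r ^ ((1-a)/(2*a) : ℝ) := by rw [hr1]
  -- complex computation
  rw [hf]
  have harg : (a : ℂ) * ((ξa : ℂ) + Complex.I * ((k:ℂ) * (Real.pi:ℂ) / (a:ℂ)))
      = ((a * ξa : ℝ) : ℂ) + (((k:ℝ) * Real.pi : ℝ) : ℂ) * Complex.I := by
    push_cast
    have : (a:ℂ) ≠ 0 := by exact_mod_cast hane
    field_simp
  have hsinh : Complex.sinh ((a : ℂ) * ((ξa : ℂ) + Complex.I * ((k:ℂ) * (Real.pi:ℂ) / (a:ℂ))))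
      = ((Real.sinh (a * ξa) : ℝ) : ℂ) * (-1) ^ k := by
    rw [harg, Complex.sinh_add, Complex.cosh_mul_I, Complex.sinh_mul_I]
    rw [← Complex.ofReal_cos, ← Complex.ofReal_sin, ← Complex.ofReal_sinh, ← Complex.ofReal_cosh]
    rw [Real.sin_int_mul_pi]
    have hc : Real.cos ((k:ℝ) * Real.pi) = (-1:ℝ) ^ k := by
      simpa using Real.cos_int_mul_pi_sub 0 k
    rw [hc]
    push_cast
    ring
  have hexp : Complex.exp ((ξa : ℂ) + Complex.I * ((k:ℂ) * (Real.pi:ℂ) / (a:ℂ)))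
      = ((Real.exp ξa : ℝ) : ℂ) * ((Real.cos θ : ℝ) + Complex.I * (Real.sin θ : ℝ)) := by
    have : (ξa : ℂ) + Complex.I * ((k:ℂ) * (Real.pi:ℂ) / (a:ℂ)) = (ξa : ℂ) + (θ:ℝ) * Complex.I := by
      rw [hθ]; push_cast; ring
    rw [this, Complex.exp_add, Complex.exp_mul_I, Complex.ofReal_exp,
      ← Complex.ofReal_cos, ← Complex.ofReal_sin]
    ring
  rw [hsinh, hexp, ← key]
  push_cast
  ring
end

section
/- The real function g(t) = sinh(a·t)·e^{t} is strictly increasing on the interval [ξ_a, ∞) and maps [ξ_a, ∞) bijectively onto [x_a, ∞), where ξ_a = (1/(2a))·ln((1−a)/(1+a)) and x_a = −(a/(1+a))·((1−a)/(1+a))^{(1−a)/(2a)}. (The inverse of this restriction is the real branch ψ₀ : [x_a, ∞) → [ξ_a, ∞).) -/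
open Real Set

theorem stmt_6 (a : ℝ) (ha0 : 0 < a) (ha1 : a < 1)
    (g : ℝ → ℝ) (hg : ∀ t : ℝ, g t = Real.sinh (a * t) * Real.exp t)
    (ξa : ℝ) (hξa : ξa = (1 / (2 * a)) * Real.log ((1 - a) / (1 + a)))
    (xa : ℝ) (hxa : xa = -(a / (1 + a)) * ((1 - a) / (1 + a)) ^ ((1 - a) / (2 * a))) :
    StrictMonoOn g (Set.Ici ξa) ∧ Set.BijOn g (Set.Ici ξa) (Set.Ici xa) := by
  have ha0' : (0:ℝ) < 1 - a := by linarith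
  have ha1' : (0:ℝ) < 1 + a := by linarith
  set r : ℝ := (1 - a) / (1 + a) with hrdef
  have hr : 0 < r := div_pos ha0' ha1'
  have hane : a ≠ 0 := ne_of_gt ha0
  -- derivative
  have hgfun : g = fun t => Real.sinh (a * t) * Real.exp t := funext hg
  have hd : ∀ t : ℝ, HasDerivAt g ((a * Real.cosh (a * t) + Real.sinh (a * t)) * Real.exp t) t := by
    intro t
    have h1 : HasDerivAt (fun t : ℝ => a * t) a t := by
      simpa using (hasDerivAt_id t).const_mul a
    have h2 : HasDerivAt (fun t : ℝ => Real.sinh (a * t)) (Real.cosh (a * t) * a) t := h1.sinh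
    have h3 : HasDerivAt (fun t => Real.sinh (a * t) * Real.exp t) _ t := h2.mul (Real.hasDerivAt_exp t)
    rw [hgfun]
    convert h3 using 1
    ring
  have hcont : ContinuousOn g (Set.Ici ξa) := by
    rw [hgfun]
    exact (Continuous.mul (Real.continuous_sinh.comp (continuous_const.mul continuous_id))
      Real.continuous_exp).continuousOn
  have hpos : ∀ t ∈ interior (Set.Ici ξa), 0 < deriv g t := by
    intro t ht
    rw [interior_Ici] at ht
    have hderiv : deriv g t = (a * Real.cosh (a * t) + Real.sinh (a * t)) * Real.exp t :=
      (hd t).deriv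
    rw [hderiv]
    have hx : Real.log r < 2 * (a * t) := by
      have : ξa < t := ht
      rw [hξa] at this
      have := (mul_lt_mul_iff_right₀ ha0).mpr this
      calc Real.log r = 2 * (a * ((1 / (2 * a)) * Real.log r)) := by field_simp
        _ < 2 * (a * t) := by linarith
    have hexp : r < Real.exp (2 * (a * t)) := by
      rw [← Real.exp_log hr]
      exact Real.exp_lt_exp.mpr hx
    have hsplit : Real.exp (2 * (a * t)) = Real.exp (a * t) * Real.exp (a * t) := by
      rw [← Real.exp_add]; ring_nf
    have hprod : Real.exp (a * t) * Real.exp (-(a * t)) = 1 := by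
      rw [← Real.exp_add]; simp
    have he1 : 0 < Real.exp (a * t) := Real.exp_pos _
    have he2 : 0 < Real.exp (-(a * t)) := Real.exp_pos _
    have het : 0 < Real.exp t := Real.exp_pos _
    rw [Real.cosh_eq, Real.sinh_eq]
    have key : 0 < a * ((Real.exp (a * t) + Real.exp (-(a * t))) / 2) +
        (Real.exp (a * t) - Real.exp (-(a * t))) / 2 := by
      rw [hsplit] at hexp
      have hr' : r = (1 - a) / (1 + a) := hrdef
      have h4 : (1 - a) < (1 + a) * (Real.exp (a * t) * Real.exp (a * t)) := by
        rw [hr'] at hexp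
        calc (1 - a) = ((1 - a) / (1 + a)) * (1 + a) := by field_simp
          _ < (Real.exp (a * t) * Real.exp (a * t)) * (1 + a) := by
              exact (mul_lt_mul_iff_left₀ ha1').mpr hexp
          _ = (1 + a) * (Real.exp (a * t) * Real.exp (a * t)) := by ring
      nlinarith [mul_pos he1 he2]
    positivity
  have hmono : StrictMonoOn g (Set.Ici ξa) :=
    strictMonoOn_of_deriv_pos (convex_Ici ξa) hcont hpos
  -- value at ξa
  have hgξ : g ξa = xa := by
    have haξ : a * ξa = Real.log r / 2 := by
      rw [hξa]; field_simp
    have hrpow : ∀ s : ℝ, r ^ s = Real.exp (s * Real.log r) := by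
      intro s
      rw [Real.rpow_def_of_pos hr, mul_comm]
    have hexpξ : Real.exp ξa = Real.exp ((1 / (2 * a)) * Real.log r) := by rw [hξa]
    rw [hg, Real.sinh_eq, haξ, hexpξ, hxa, hrpow]
    have e1 : Real.exp (Real.log r / 2) = Real.exp (-(Real.log r / 2)) * r := by
      have h5 : Real.exp (-(Real.log r / 2)) * Real.exp (Real.log r) =
          Real.exp (Real.log r / 2) := by
        rw [← Real.exp_add]; congr 1; ring
      rw [Real.exp_log hr] at h5
      exact h5.symm
    have e2 : Real.exp (-(Real.log r / 2)) * Real.exp (1 / (2 * a) * Real.log r) =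
        Real.exp ((1 - a) / (2 * a) * Real.log r) := by
      rw [← Real.exp_add]
      congr 1
      field_simp
      ring
    have hr1 : r - 1 = -(2 * a) / (1 + a) := by
      rw [hrdef]; field_simp; ring
    rw [e1]
    have : (Real.exp (-(Real.log r / 2)) * r - Real.exp (-(Real.log r / 2))) / 2 *
        Real.exp (1 / (2 * a) * Real.log r) =
        ((r - 1) / 2) * (Real.exp (-(Real.log r / 2)) * Real.exp (1 / (2 * a) * Real.log r)) := by
      ring
    rw [this, e2, hr1]
    ring
  refine ⟨hmono, ?_, hmono.injOn, ?_⟩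
  · -- MapsTo
    intro t ht
    rcases eq_or_lt_of_le (show ξa ≤ t from ht) with h | h
    · rw [← h, hgξ]; exact Set.self_mem_Ici
    · have := hmono (Set.self_mem_Ici) ht h
      rw [hgξ] at this
      exact le_of_lt this
  · -- SurjOn
    intro y hy
    have hy' : xa ≤ y := hy
    set b : ℝ := max ξa (max 1 (y / a)) with hb
    have hξb : ξa ≤ b := le_max_left _ _
    have hb1 : (1:ℝ) ≤ b := le_trans (le_max_left _ _) (le_max_right _ _)
    have hby : y / a ≤ b := le_trans (le_max_right _ _) (le_max_right _ _)
    have hb0 : 0 < b := lt_of_lt_of_le one_pos hb1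
    have hab : 0 < a * b := mul_pos ha0 hb0
    have hgb : y ≤ g b := by
      rw [hg]
      have h1 : a * b ≤ Real.sinh (a * b) := le_of_lt (Real.self_lt_sinh_iff.mpr hab)
      have h2 : (1:ℝ) ≤ Real.exp b := by
        rw [← Real.exp_zero]
        exact Real.exp_le_exp.mpr (le_of_lt hb0)
      have h3 : y ≤ a * b := by
        rw [div_le_iff₀ ha0] at hby
        linarith [hby]
      calc y ≤ a * b := h3
        _ = (a * b) * 1 := by ring
        _ ≤ Real.sinh (a * b) * Real.exp b := by
            apply mul_le_mul h1 h2 one_pos.le (le_trans hab.le h1)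
    have hmem : y ∈ Set.Icc (g ξa) (g b) := ⟨by rw [hgξ]; exact hy', hgb⟩
    have hsub : Set.Icc (g ξa) (g b) ⊆ g '' Set.Icc ξa b :=
      intermediate_value_Icc hξb (hcont.mono (Set.Icc_subset_Ici_self))
    obtain ⟨t, ht, hgt⟩ := hsub hmem
    exact ⟨t, ht.1, hgt⟩
end

section
/- The real function g(t) = sinh(a·t)·e^{t} is strictly decreasing on the interval (−∞, ξ_a] and maps (−∞, ξ_a] bijectively onto [x_a, 0), where ξ_a = (1/(2a))·ln((1−a)/(1+a)) and x_a = −(a/(1+a))·((1−a)/(1+a))^{(1−a)/(2a)}. (The inverse of this restriction is the real branch ψ₋₁ : [x_a, 0) → (−∞, ξ_a].) -/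
open Real Set Filter

theorem stmt_7 (a : ℝ) (ha0 : 0 < a) (ha1 : a < 1)
    (g : ℝ → ℝ) (hg : ∀ t : ℝ, g t = Real.sinh (a * t) * Real.exp t)
    (ξa : ℝ) (hξa : ξa = (1 / (2 * a)) * Real.log ((1 - a) / (1 + a)))
    (xa : ℝ) (hxa : xa = -(a / (1 + a)) * ((1 - a) / (1 + a)) ^ ((1 - a) / (2 * a))) :
    StrictAntiOn g (Set.Iic ξa) ∧ Set.BijOn g (Set.Iic ξa) (Set.Ico xa 0) := by
  have hgfun : g = fun t => Real.sinh (a * t) * Real.exp t := funext hg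
  subst hgfun hξa hxa
  set r : ℝ := (1 - a) / (1 + a) with hr_def
  have hpa : (0:ℝ) < 1 + a := by linarith
  have hma : (0:ℝ) < 1 - a := by linarith
  have hr : 0 < r := div_pos hma hpa
  have hr1 : r < 1 := (div_lt_one hpa).2 (by linarith)
  have hL : Real.log r < 0 := Real.log_neg hr hr1
  have h2a : (0:ℝ) < 2 * a := by linarith
  set ξ : ℝ := (1 / (2 * a)) * Real.log r with hξ_def
  have hξneg : ξ < 0 := mul_neg_of_pos_of_neg (by positivity) hL
  -- key exponential inequality
  have hkey : ∀ t, t < ξ → Real.exp (2 * a * t) < r := by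
    intro t ht
    have h1 : 2 * a * t < Real.log r := by
      have h2 := (mul_lt_mul_iff_right₀ h2a).2 ht
      calc 2 * a * t < 2 * a * ((1 / (2 * a)) * Real.log r) := h2
        _ = Real.log r := by field_simp
    calc Real.exp (2 * a * t) < Real.exp (Real.log r) := Real.exp_lt_exp.2 h1
      _ = r := Real.exp_log hr
  -- derivative
  have hderiv : ∀ t : ℝ, HasDerivAt (fun t => Real.sinh (a * t) * Real.exp t)
      (a * Real.cosh (a * t) * Real.exp t + Real.sinh (a * t) * Real.exp t) t := by
    intro t
    have h1 : HasDerivAt (fun t : ℝ => Real.sinh (a * t)) (a * Real.cosh (a * t)) t := by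
      have h2 := (Real.hasDerivAt_sinh (a * t)).comp t ((hasDerivAt_id t).const_mul a)
      simpa [mul_comm, Function.comp_def] using h2
    exact h1.mul (Real.hasDerivAt_exp t)
  have hneg : ∀ t, t < ξ →
      a * Real.cosh (a * t) * Real.exp t + Real.sinh (a * t) * Real.exp t < 0 := by
    intro t ht
    have h1 := hkey t ht
    have h2 : (1 + a) * Real.exp (2 * a * t) < 1 - a := by
      have h3 := (mul_lt_mul_iff_right₀ hpa).2 h1
      calc (1 + a) * Real.exp (2 * a * t) < (1 + a) * r := h3
        _ = 1 - a := by rw [hr_def]; field_simp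
    have h3 : Real.exp (a * t) = Real.exp (2 * a * t) * Real.exp (-(a * t)) := by
      rw [← Real.exp_add]; ring_nf
    have hb : (1 + a) * Real.exp (a * t) < (1 - a) * Real.exp (-(a * t)) := by
      rw [h3]
      calc (1 + a) * (Real.exp (2 * a * t) * Real.exp (-(a * t)))
          = ((1 + a) * Real.exp (2 * a * t)) * Real.exp (-(a * t)) := by ring
        _ < (1 - a) * Real.exp (-(a * t)) :=
            mul_lt_mul_of_pos_right h2 (Real.exp_pos _)
    rw [Real.cosh_eq, Real.sinh_eq]
    nlinarith [Real.exp_pos t, hb]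
  have hanti : StrictAntiOn (fun t => Real.sinh (a * t) * Real.exp t) (Iic ξ) := by
    apply strictAntiOn_of_deriv_neg (convex_Iic ξ)
    · exact (((Real.continuous_sinh.comp (continuous_const.mul continuous_id)).mul
        Real.continuous_exp)).continuousOn
    · intro t ht
      rw [interior_Iic] at ht
      rw [(hderiv t).deriv]
      exact hneg t ht
  -- value at ξ
  have hexp : ∀ c : ℝ, Real.exp (c * ξ) = r ^ (c / (2 * a)) := by
    intro c
    rw [Real.rpow_def_of_pos hr]
    congr 1
    rw [hξ_def]; ring
  have hgξ : Real.sinh (a * ξ) * Real.exp ξ = -(a / (1 + a)) * r ^ ((1 - a) / (2 * a)) := by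
    have e1 : Real.exp (a * ξ) * Real.exp ξ = Real.exp ((1 + a) * ξ) := by
      rw [← Real.exp_add]; ring_nf
    have e2 : Real.exp (-(a * ξ)) * Real.exp ξ = Real.exp ((1 - a) * ξ) := by
      rw [← Real.exp_add]; ring_nf
    have h0 : Real.sinh (a * ξ) * Real.exp ξ
        = (Real.exp (a * ξ) * Real.exp ξ - Real.exp (-(a * ξ)) * Real.exp ξ) / 2 := by
      rw [Real.sinh_eq]; ring
    rw [h0, e1, e2, hexp, hexp]
    have hsum : (1 + a) / (2 * a) = (1 - a) / (2 * a) + 1 := by field_simp; ring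
    rw [hsum, Real.rpow_add hr, Real.rpow_one]
    have hrm1 : r - 1 = -(2 * a) / (1 + a) := by rw [hr_def]; field_simp; ring
    linear_combination (r ^ ((1 - a) / (2 * a)) / 2) * hrm1
  -- tendsto 0 at -infty
  have hform : ∀ t : ℝ, Real.sinh (a * t) * Real.exp t
      = (Real.exp ((1 + a) * t) - Real.exp ((1 - a) * t)) / 2 := by
    intro t
    rw [Real.sinh_eq, div_mul_eq_mul_div, sub_mul, ← Real.exp_add, ← Real.exp_add]
    ring_nf
  have htend : Tendsto (fun t => Real.sinh (a * t) * Real.exp t) atBot (nhds 0) := by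
    simp only [hform]
    have h1 : Tendsto (fun t : ℝ => Real.exp ((1 + a) * t)) atBot (nhds 0) :=
      Real.tendsto_exp_atBot.comp (Tendsto.const_mul_atBot hpa tendsto_id)
    have h2 : Tendsto (fun t : ℝ => Real.exp ((1 - a) * t)) atBot (nhds 0) :=
      Real.tendsto_exp_atBot.comp (Tendsto.const_mul_atBot hma tendsto_id)
    have h3 := (h1.sub h2).div_const 2
    simpa using h3
  refine ⟨hanti, ?_, hanti.injOn, ?_⟩
  · -- MapsTo
    intro t ht
    simp only [mem_Iic] at ht
    constructor
    · show -(a / (1 + a)) * r ^ ((1 - a) / (2 * a)) ≤ Real.sinh (a * t) * Real.exp t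
      rcases eq_or_lt_of_le ht with h | h
      · rw [h, hgξ]
      · have h2 := hanti (mem_Iic.2 ht) (mem_Iic.2 le_rfl) h
        simp only at h2
        rw [hgξ] at h2
        exact h2.le
    · have hat : a * t < 0 := mul_neg_of_pos_of_neg ha0 (lt_of_le_of_lt ht hξneg)
      show Real.sinh (a * t) * Real.exp t < 0
      exact mul_neg_of_neg_of_pos (Real.sinh_neg_iff.2 hat) (Real.exp_pos t)
  · -- SurjOn
    intro y hy
    have hy0 : y < 0 := hy.2
    have hy1 : -(a / (1 + a)) * r ^ ((1 - a) / (2 * a)) ≤ y := hy.1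
    have hev : ∀ᶠ t in atBot, y < Real.sinh (a * t) * Real.exp t :=
      htend.eventually (eventually_gt_nhds hy0)
    obtain ⟨t₀, ht₀, ht₀ξ⟩ := (hev.and (eventually_le_atBot ξ)).exists
    have hcont : ContinuousOn (fun t => Real.sinh (a * t) * Real.exp t) (Icc t₀ ξ) :=
      ((Real.continuous_sinh.comp (continuous_const.mul continuous_id)).mul
        Real.continuous_exp).continuousOn
    have hivt := intermediate_value_Icc' ht₀ξ hcont
    have hyin : y ∈ Icc (Real.sinh (a * ξ) * Real.exp ξ) (Real.sinh (a * t₀) * Real.exp t₀) :=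
      ⟨by rw [hgξ]; exact hy1, ht₀.le⟩
    obtain ⟨t, htmem, hteq⟩ := hivt hyin
    exact ⟨t, mem_Iic.2 htmem.2, hteq⟩
end

section
/- Let ψ₀ : [x_a, ∞) → [ξ_a, ∞) denote the inverse of the restriction of g(t) = sinh(a·t)·e^{t} to [ξ_a, ∞). Then ψ₀ is strictly increasing and concave on [x_a, ∞). -/
open Real Set

theorem stmt_9 (a : ℝ) (ha0 : 0 < a) (ha1 : a < 1)
    (g : ℝ → ℝ) (hg : ∀ t : ℝ, g t = Real.sinh (a * t) * Real.exp t)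
    (ξa : ℝ) (hξa : ξa = (1 / (2 * a)) * Real.log ((1 - a) / (1 + a)))
    (xa : ℝ) (hxa : xa = -(a / (1 + a)) * ((1 - a) / (1 + a)) ^ ((1 - a) / (2 * a)))
    (ψ : ℝ → ℝ)
    (hmaps : Set.MapsTo ψ (Set.Ici xa) (Set.Ici ξa))
    (hinv : Set.InvOn ψ g (Set.Ici ξa) (Set.Ici xa)) :
    StrictMonoOn ψ (Set.Ici xa) ∧ ConcaveOn ℝ (Set.Ici xa) ψ := by
  have ha1' : (0:ℝ) < 1 - a := by linarith
  have ha2 : (0:ℝ) < 1 + a := by linarith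
  have hr : (0:ℝ) < (1-a)/(1+a) := div_pos ha1' ha2
  have hgeq : g = fun t => Real.sinh (a*t) * Real.exp t := funext hg
  subst hgeq
  -- derivatives
  have hsinh : ∀ t : ℝ, HasDerivAt (fun t => Real.sinh (a*t)) (a * Real.cosh (a*t)) t := by
    intro t
    have := (Real.hasDerivAt_sinh (a*t)).comp t ((hasDerivAt_id t).const_mul a)
    simpa [mul_comm, Function.comp_def] using this
  have hcosh : ∀ t : ℝ, HasDerivAt (fun t => Real.cosh (a*t)) (a * Real.sinh (a*t)) t := by
    intro t
    have := (Real.hasDerivAt_cosh (a*t)).comp t ((hasDerivAt_id t).const_mul a)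
    simpa [mul_comm, Function.comp_def] using this
  have hd : ∀ t : ℝ, HasDerivAt (fun t => Real.sinh (a*t) * Real.exp t)
      ((a * Real.cosh (a*t) + Real.sinh (a*t)) * Real.exp t) t := by
    intro t
    have := (hsinh t).mul (Real.hasDerivAt_exp t)
    exact this.congr_deriv (by ring)
  have hd2 : ∀ t : ℝ, HasDerivAt (fun t => (a * Real.cosh (a*t) + Real.sinh (a*t)) * Real.exp t)
      (((1 + a^2) * Real.sinh (a*t) + 2*a * Real.cosh (a*t)) * Real.exp t) t := by
    intro t
    have h1 : HasDerivAt (fun t => a * Real.cosh (a*t) + Real.sinh (a*t))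
        (a * (a * Real.sinh (a*t)) + a * Real.cosh (a*t)) t :=
      ((hcosh t).const_mul a).add (hsinh t)
    have := h1.mul (Real.hasDerivAt_exp t)
    exact this.congr_deriv (by ring)
  have hderiv : deriv (fun t => Real.sinh (a*t) * Real.exp t)
      = fun t => (a * Real.cosh (a*t) + Real.sinh (a*t)) * Real.exp t :=
    funext fun t => (hd t).deriv
  -- exponential facts
  have hlog : 2*a*ξa = Real.log ((1-a)/(1+a)) := by
    rw [hξa]; field_simp
  have hE2 : ∀ t : ℝ, ξa ≤ t → (1-a)/(1+a) ≤ Real.exp (a*t) * Real.exp (a*t) := by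
    intro t ht
    have h1 : Real.log ((1-a)/(1+a)) ≤ 2*a*t := by nlinarith
    calc (1-a)/(1+a) = Real.exp (Real.log ((1-a)/(1+a))) := (Real.exp_log hr).symm
      _ ≤ Real.exp (2*a*t) := Real.exp_le_exp.2 h1
      _ = Real.exp (a*t) * Real.exp (a*t) := by rw [← Real.exp_add]; ring_nf
  have hE2' : ∀ t : ℝ, ξa < t → (1-a)/(1+a) < Real.exp (a*t) * Real.exp (a*t) := by
    intro t ht
    have h1 : Real.log ((1-a)/(1+a)) < 2*a*t := by nlinarith
    calc (1-a)/(1+a) = Real.exp (Real.log ((1-a)/(1+a))) := (Real.exp_log hr).symm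
      _ < Real.exp (2*a*t) := Real.exp_lt_exp.2 h1
      _ = Real.exp (a*t) * Real.exp (a*t) := by rw [← Real.exp_add]; ring_nf
  have hEi : ∀ t : ℝ, Real.exp (a*t) * Real.exp (-(a*t)) = 1 := by
    intro t; rw [← Real.exp_add]; simp
  -- positivity of the first derivative on Ioi ξa
  have key1 : ∀ t : ℝ, ξa < t → 0 < a * Real.cosh (a*t) + Real.sinh (a*t) := by
    intro t ht
    have hE := hE2' t ht
    have hEp := Real.exp_pos (a*t)
    have hEip := Real.exp_pos (-(a*t))
    have hprod := hEi t
    have h3 : (1-a) < (1+a) * (Real.exp (a*t) * Real.exp (a*t)) := by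
      rw [div_lt_iff₀ ha2] at hE; linarith [hE]
    have heq : a * Real.cosh (a*t) + Real.sinh (a*t)
        = ((1+a) * Real.exp (a*t) - (1-a) * Real.exp (-(a*t))) / 2 := by
      rw [Real.cosh_eq, Real.sinh_eq]; ring
    rw [heq]
    have : (1-a) * Real.exp (-(a*t)) < (1+a) * Real.exp (a*t) := by
      nlinarith
    linarith
  -- nonnegativity of the second derivative on Ici ξa
  have key2 : ∀ t : ℝ, ξa ≤ t → 0 ≤ (1 + a^2) * Real.sinh (a*t) + 2*a * Real.cosh (a*t) := by
    intro t ht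
    have hE := hE2 t ht
    have hEp := Real.exp_pos (a*t)
    have hEip := Real.exp_pos (-(a*t))
    have hprod := hEi t
    have h3 : (1-a) ≤ (1+a) * (Real.exp (a*t) * Real.exp (a*t)) := by
      rw [div_le_iff₀ ha2] at hE; linarith [hE]
    have heq : (1 + a^2) * Real.sinh (a*t) + 2*a * Real.cosh (a*t)
        = ((1+a)^2 * Real.exp (a*t) - (1-a)^2 * Real.exp (-(a*t))) / 2 := by
      rw [Real.cosh_eq, Real.sinh_eq]; ring
    rw [heq]
    have h4 : (1-a)^2 ≤ (1+a)^2 * (Real.exp (a*t) * Real.exp (a*t)) := by nlinarith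
    have : (1-a)^2 * Real.exp (-(a*t)) ≤ (1+a)^2 * Real.exp (a*t) := by nlinarith
    linarith
  have hcont : ContinuousOn (fun t => Real.sinh (a*t) * Real.exp t) (Set.Ici ξa) := by
    fun_prop
  -- g strictly mono on Ici ξa
  have hsm : StrictMonoOn (fun t => Real.sinh (a*t) * Real.exp t) (Set.Ici ξa) := by
    apply strictMonoOn_of_deriv_pos (convex_Ici ξa) hcont
    intro x hx
    rw [interior_Ici] at hx
    rw [hderiv]
    exact mul_pos (key1 x hx) (Real.exp_pos x)
  -- g convex on Ici ξa
  have hconv : ConvexOn ℝ (Set.Ici ξa) (fun t => Real.sinh (a*t) * Real.exp t) := by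
    apply convexOn_of_deriv2_nonneg (convex_Ici ξa) hcont
    · intro x hx
      exact (hd x).differentiableAt.differentiableWithinAt
    · intro x hx
      rw [hderiv]
      exact (hd2 x).differentiableAt.differentiableWithinAt
    · intro x hx
      rw [interior_Ici] at hx
      have : deriv (deriv (fun t => Real.sinh (a*t) * Real.exp t)) x
          = ((1 + a^2) * Real.sinh (a*x) + 2*a * Real.cosh (a*x)) * Real.exp x := by
        rw [hderiv]; exact (hd2 x).deriv
      simp only [Function.iterate_succ, Function.iterate_zero, Function.comp_apply, id]
      rw [this]
      exact mul_nonneg (key2 x hx.le) (Real.exp_pos x).le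
  set G := fun t => Real.sinh (a*t) * Real.exp t with hG
  have hginv : ∀ x ∈ Set.Ici xa, G (ψ x) = x := fun x hx => hinv.2 hx
  -- strict monotonicity of ψ
  have hmono : StrictMonoOn ψ (Set.Ici xa) := by
    intro x hx y hy hxy
    by_contra h
    push_neg at h
    rcases eq_or_lt_of_le h with h' | h'
    · have : G (ψ x) = G (ψ y) := by rw [h']
      rw [hginv x hx, hginv y hy] at this
      exact absurd this (ne_of_lt hxy)
    · have := hsm (hmaps hy) (hmaps hx) h'
      rw [hginv x hx, hginv y hy] at this
      linarith
  refine ⟨hmono, ⟨convex_Ici xa, ?_⟩⟩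
  intro x hx y hy la lb hla hlb hab
  simp only [smul_eq_mul]
  have hz : la * x + lb * y ∈ Set.Ici xa := by
    have := (convex_Ici xa) hx hy hla hlb hab
    simpa using this
  have hs : la * ψ x + lb * ψ y ∈ Set.Ici ξa := by
    have := (convex_Ici ξa) (hmaps hx) (hmaps hy) hla hlb hab
    simpa using this
  by_contra h
  push_neg at h
  have h1 := hsm (hmaps hz) hs h
  rw [hginv _ hz] at h1
  have h2 := hconv.2 (hmaps hx) (hmaps hy) hla hlb hab
  simp only [smul_eq_mul] at h2
  rw [hginv x hx, hginv y hy] at h2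
  linarith
end

section
/- For every η with 0 < η < π/(1+a), the value of f at the point Ξ(η) + i·η, where Ξ(η) = (1/(2a))·ln(sin((1−a)η)/sin((1+a)η)), is real and equals −(sin(2aη)/(2·sin((1+a)η)))·(sin((1−a)η)/sin((1+a)η))^{(1−a)/(2a)}, and this value is strictly negative. -/
open Complex Real

theorem stmt_10 (a : ℝ) (ha0 : 0 < a) (ha1 : a < 1)
    (f : ℂ → ℂ) (hf : ∀ w : ℂ, f w = Complex.sinh (a * w) * Complex.exp w)
    (Ξ : ℝ → ℝ)
    (hΞ : ∀ η : ℝ, Ξ η = (1 / (2 * a)) * Real.log (Real.sin ((1 - a) * η) / Real.sin ((1 + a) * η))) :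
    ∀ η : ℝ, 0 < η → η < Real.pi / (1 + a) →
      f ((Ξ η : ℂ) + (η : ℂ) * Complex.I) =
          ((-(Real.sin (2 * a * η) / (2 * Real.sin ((1 + a) * η))) *
              (Real.sin ((1 - a) * η) / Real.sin ((1 + a) * η)) ^ ((1 - a) / (2 * a)) : ℝ) : ℂ) ∧
        -(Real.sin (2 * a * η) / (2 * Real.sin ((1 + a) * η))) *
            (Real.sin ((1 - a) * η) / Real.sin ((1 + a) * η)) ^ ((1 - a) / (2 * a)) < 0 := by
  intro η hη0 hη1
  have ha1' : (0:ℝ) < 1 + a := by linarith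
  have ha' : (0:ℝ) < 1 - a := by linarith
  have hπ : (1 + a) * η < Real.pi := by
    have := (lt_div_iff₀ ha1').mp hη1
    nlinarith
  have hsp : 0 < Real.sin ((1 + a) * η) := by
    exact Real.sin_pos_of_pos_of_lt_pi (by positivity) hπ
  have hsm : 0 < Real.sin ((1 - a) * η) := by
    apply Real.sin_pos_of_pos_of_lt_pi (by positivity)
    nlinarith
  have h2a : 0 < Real.sin (2 * a * η) := by
    apply Real.sin_pos_of_pos_of_lt_pi (by positivity)
    nlinarith
  have hr : 0 < Real.sin ((1 - a) * η) / Real.sin ((1 + a) * η) := div_pos hsm hsp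
  set ξ : ℝ := Ξ η with hξdef
  have hξ : ξ = (1 / (2 * a)) * Real.log (Real.sin ((1 - a) * η) / Real.sin ((1 + a) * η)) := hΞ η
  have hexp2a : Real.exp (2 * a * ξ) = Real.sin ((1 - a) * η) / Real.sin ((1 + a) * η) := by
    rw [hξ]
    rw [show 2 * a * ((1 / (2 * a)) * Real.log (Real.sin ((1 - a) * η) / Real.sin ((1 + a) * η)))
        = Real.log (Real.sin ((1 - a) * η) / Real.sin ((1 + a) * η)) by
      field_simp]
    exact Real.exp_log hr
  have hrpow : (Real.sin ((1 - a) * η) / Real.sin ((1 + a) * η)) ^ ((1 - a) / (2 * a))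
      = Real.exp ((1 - a) * ξ) := by
    rw [Real.rpow_def_of_pos hr, hξ]
    ring_nf
  have hkey : Real.exp ((1 + a) * ξ) * Real.sin ((1 + a) * η)
      = Real.exp ((1 - a) * ξ) * Real.sin ((1 - a) * η) := by
    rw [show (1 + a) * ξ = (1 - a) * ξ + 2 * a * ξ by ring, Real.exp_add, hexp2a]
    field_simp
    exact div_self (by rw [mul_comm]; exact hsp.ne')
  have hsin : Real.sin (2 * a * η)
      = Real.sin ((1 + a) * η) * Real.cos ((1 - a) * η)
        - Real.cos ((1 + a) * η) * Real.sin ((1 - a) * η) := by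
    rw [← Real.sin_sub]; ring_nf
  constructor
  · rw [hf]
    have hw : ∀ b : ℝ, Complex.exp ((b : ℂ) * ((ξ : ℂ) + (η : ℂ) * Complex.I))
        = (Real.exp (b * ξ) : ℂ) * ((Real.cos (b * η) : ℂ) + (Real.sin (b * η) : ℂ) * Complex.I) := by
      intro b
      rw [show (b : ℂ) * ((ξ : ℂ) + (η : ℂ) * Complex.I) = ((b * ξ : ℝ) : ℂ) + ((b * η : ℝ) : ℂ) * Complex.I by
        push_cast; ring]
      rw [Complex.exp_add, Complex.exp_mul_I, Complex.ofReal_exp, Complex.ofReal_cos, Complex.ofReal_sin]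
    have expand : Complex.sinh ((a : ℂ) * ((ξ : ℂ) + (η : ℂ) * Complex.I)) *
        Complex.exp ((ξ : ℂ) + (η : ℂ) * Complex.I)
        = (Complex.exp (((1 + a : ℝ) : ℂ) * ((ξ : ℂ) + (η : ℂ) * Complex.I))
          - Complex.exp (((1 - a : ℝ) : ℂ) * ((ξ : ℂ) + (η : ℂ) * Complex.I))) / 2 := by
      have h1 : (((1 + a : ℝ)) : ℂ) * ((ξ : ℂ) + (η : ℂ) * Complex.I)
          = (a : ℂ) * ((ξ : ℂ) + (η : ℂ) * Complex.I) + ((ξ : ℂ) + (η : ℂ) * Complex.I) := by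
        push_cast; ring
      have h2 : (((1 - a : ℝ)) : ℂ) * ((ξ : ℂ) + (η : ℂ) * Complex.I)
          = -((a : ℂ) * ((ξ : ℂ) + (η : ℂ) * Complex.I)) + ((ξ : ℂ) + (η : ℂ) * Complex.I) := by
        push_cast; ring
      rw [h1, h2]
      simp only [Complex.exp_add, Complex.exp_neg, Complex.sinh]
      field_simp [Complex.exp_ne_zero]
    rw [expand, hw, hw, hrpow]
    have hspC : (Real.sin ((1 + a) * η) : ℂ) ≠ 0 := by
      exact_mod_cast hsp.ne'
    have hkeyC : (Real.exp ((1 + a) * ξ) : ℂ) * (Real.sin ((1 + a) * η) : ℂ)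
        = (Real.exp ((1 - a) * ξ) : ℂ) * (Real.sin ((1 - a) * η) : ℂ) := by
      exact_mod_cast congrArg (Complex.ofReal) hkey
    have hsinC : (Real.sin (2 * a * η) : ℂ)
        = (Real.sin ((1 + a) * η) : ℂ) * (Real.cos ((1 - a) * η) : ℂ)
          - (Real.cos ((1 + a) * η) : ℂ) * (Real.sin ((1 - a) * η) : ℂ) := by
      exact_mod_cast congrArg (Complex.ofReal) hsin
    push_cast at hkeyC hsinC hspC ⊢
    field_simp
    linear_combination (norm := ring_nf) ((Complex.cos ((1 + (a:ℂ)) * (η:ℂ)) + Complex.sin ((1 + (a:ℂ)) * (η:ℂ)) * Complex.I)) * hkeyC + Complex.exp ((1 - (a:ℂ)) * (ξ:ℂ)) * hsinC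
  · have h1 : 0 < Real.sin (2 * a * η) / (2 * Real.sin ((1 + a) * η)) :=
      div_pos h2a (by positivity)
    have h2 : 0 < (Real.sin ((1 - a) * η) / Real.sin ((1 + a) * η)) ^ ((1 - a) / (2 * a)) :=
      Real.rpow_pos_of_pos hr _
    nlinarith [mul_pos h1 h2]
end

section
/- Define Ω₀ ⊂ ℂ as the union of: the set of ξ + iη with 0 < η < π/(1+a) and e^{(1+a)ξ}·sin((1+a)η) > e^{(1−a)ξ}·sin((1−a)η); the set of real ξ with ξ > ξ_a; and the set of ξ + iη with −π/(1+a) < η < 0 and e^{(1+a)ξ}·sin((1+a)η) < e^{(1−a)ξ}·sin((1−a)η). Then f is injective on Ω₀ and the image f(Ω₀) equals ℂ ∖ (−∞, x_a]; that is, f restricted to Ω₀ is a bijection onto ℂ ∖ (−∞, x_a]. -/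
open Complex Set Topology Filter

noncomputable def Fc (a : ℝ) (w : ℂ) : ℂ :=
  (Complex.exp (((1+a : ℝ) : ℂ) * w) - Complex.exp (((1-a : ℝ) : ℂ) * w)) / 2

lemma Fc_eq (a : ℝ) (w : ℂ) : Complex.sinh ((a : ℂ) * w) * Complex.exp w = Fc a w := by
  rw [Complex.sinh, Fc]
  have h1 : ((1+a : ℝ) : ℂ) * w = a*w + w := by push_cast; ring
  have h2 : ((1-a : ℝ) : ℂ) * w = -(a*w) + w := by push_cast; ring
  rw [h1, h2, Complex.exp_add, Complex.exp_add]
  ring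

lemma Fc_im (a : ℝ) (w : ℂ) : (Fc a w).im =
    (Real.exp ((1+a) * w.re) * Real.sin ((1+a) * w.im)
      - Real.exp ((1-a) * w.re) * Real.sin ((1-a) * w.im)) / 2 := by
  simp [Fc, Complex.exp_im, Complex.div_im, Complex.sub_im, Complex.normSq,
    Complex.mul_re, Complex.mul_im, Complex.ofReal_re, Complex.ofReal_im]

lemma Fc_re (a : ℝ) (w : ℂ) : (Fc a w).re =
    (Real.exp ((1+a) * w.re) * Real.cos ((1+a) * w.im)
      - Real.exp ((1-a) * w.re) * Real.cos ((1-a) * w.im)) / 2 := by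
  simp [Fc, Complex.exp_re, Complex.div_re, Complex.sub_re, Complex.normSq,
    Complex.mul_re, Complex.mul_im, Complex.ofReal_re, Complex.ofReal_im]

lemma Fc_conj (a : ℝ) (w : ℂ) : Fc a ((starRingEnd ℂ) w) = (starRingEnd ℂ) (Fc a w) := by
  simp [Fc, ← Complex.exp_conj, map_mul, Complex.conj_ofReal, map_sub, map_div₀]
  rw [Complex.conj_ofNat]

noncomputable def Lf (a : ℝ) (w : ℂ) : ℂ :=
  ((1-a : ℝ) : ℂ) * w + Complex.log (Complex.exp (((2*a : ℝ) : ℂ) * w) - 1)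
    - ((Real.log 2 : ℝ) : ℂ)

variable {a : ℝ} {w : ℂ}

lemma two_a_im_lt_pi (ha0 : 0 < a) (ha1 : a < 1) (hw1 : w.im < Real.pi / (1 + a)) :
    2 * a * w.im < Real.pi := by
  have h1 : 2 * a * w.im < 2 * a * (Real.pi / (1 + a)) :=
    mul_lt_mul_of_pos_left hw1 (by positivity)
  have h2 : 2 * a * (Real.pi / (1 + a)) ≤ Real.pi := by
    rw [div_eq_inv_mul, ← mul_assoc]
    calc 2 * a * (1 + a)⁻¹ * Real.pi ≤ 1 * Real.pi := by
          apply mul_le_mul_of_nonneg_right _ Real.pi_pos.le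
          rw [mul_inv_le_iff₀ (by linarith)]
          linarith
      _ = Real.pi := one_mul _
  linarith

lemma E_im_pos (ha0 : 0 < a) (ha1 : a < 1) (hw0 : 0 < w.im)
    (hw1 : w.im < Real.pi / (1 + a)) : 0 < (Complex.exp (((2*a : ℝ) : ℂ) * w)).im := by
  rw [Complex.exp_im]
  have h1 : (((2*a : ℝ) : ℂ) * w).im = 2 * a * w.im := by simp [Complex.mul_im]
  have h2 : (((2*a : ℝ) : ℂ) * w).re = 2 * a * w.re := by simp [Complex.mul_re]
  rw [h1, h2]
  have hs : 0 < Real.sin (2 * a * w.im) :=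
    Real.sin_pos_of_pos_of_lt_pi (by positivity) (two_a_im_lt_pi ha0 ha1 hw1)
  positivity

lemma X_im_pos (ha0 : 0 < a) (ha1 : a < 1) (hw0 : 0 < w.im)
    (hw1 : w.im < Real.pi / (1 + a)) :
    0 < (Complex.exp (((2*a : ℝ) : ℂ) * w) - 1).im := by
  have := E_im_pos ha0 ha1 hw0 hw1
  simpa [Complex.sub_im] using this

lemma X_mem_slitPlane (ha0 : 0 < a) (ha1 : a < 1) (hw0 : 0 < w.im)
    (hw1 : w.im < Real.pi / (1 + a)) :
    (Complex.exp (((2*a : ℝ) : ℂ) * w) - 1) ∈ Complex.slitPlane :=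
  Or.inr (ne_of_gt (X_im_pos ha0 ha1 hw0 hw1))

lemma X_ne_zero (ha0 : 0 < a) (ha1 : a < 1) (hw0 : 0 < w.im)
    (hw1 : w.im < Real.pi / (1 + a)) :
    (Complex.exp (((2*a : ℝ) : ℂ) * w) - 1) ≠ 0 :=
  Complex.slitPlane_ne_zero (X_mem_slitPlane ha0 ha1 hw0 hw1)

lemma exp_Lf (a : ℝ) (w : ℂ) (hX : Complex.exp (((2*a : ℝ) : ℂ) * w) - 1 ≠ 0) :
    Complex.exp (Lf a w) = Fc a w := by
  have h2 : Complex.exp ((Real.log 2 : ℝ) : ℂ) = 2 := by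
    rw [← Complex.ofReal_exp, Real.exp_log (by norm_num)]
    norm_num
  rw [Lf, Complex.exp_sub, Complex.exp_add, Complex.exp_log hX, h2, Fc]
  have h3 : Complex.exp (((1-a : ℝ) : ℂ) * w) * Complex.exp (((2*a : ℝ) : ℂ) * w)
      = Complex.exp (((1+a : ℝ) : ℂ) * w) := by
    rw [← Complex.exp_add]; congr 1; push_cast; ring
  rw [mul_sub, h3, mul_one]

lemma hasDerivAt_Lf (ha0 : 0 < a) (ha1 : a < 1) (hw0 : 0 < w.im)
    (hw1 : w.im < Real.pi / (1 + a)) :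
    HasDerivAt (Lf a)
      (((1-a : ℝ) : ℂ) + Complex.exp (((2*a : ℝ) : ℂ) * w) * ((2*a : ℝ) : ℂ)
        / (Complex.exp (((2*a : ℝ) : ℂ) * w) - 1)) w := by
  have h1 : HasDerivAt (fun z : ℂ => ((2*a : ℝ) : ℂ) * z) ((2*a : ℝ) : ℂ) w := by
    simpa using (hasDerivAt_id w).const_mul (((2*a : ℝ) : ℂ))
  have hE : HasDerivAt (fun z : ℂ => Complex.exp (((2*a : ℝ) : ℂ) * z))
      (Complex.exp (((2*a : ℝ) : ℂ) * w) * ((2*a : ℝ) : ℂ)) w := h1.cexp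
  have hX : HasDerivAt (fun z : ℂ => Complex.exp (((2*a : ℝ) : ℂ) * z) - 1)
      (Complex.exp (((2*a : ℝ) : ℂ) * w) * ((2*a : ℝ) : ℂ)) w := hE.sub_const 1
  have hlog : HasDerivAt (fun z : ℂ => Complex.log (Complex.exp (((2*a : ℝ) : ℂ) * z) - 1))
      (Complex.exp (((2*a : ℝ) : ℂ) * w) * ((2*a : ℝ) : ℂ)
        / (Complex.exp (((2*a : ℝ) : ℂ) * w) - 1)) w :=
    hX.clog (X_mem_slitPlane ha0 ha1 hw0 hw1)
  have hlin : HasDerivAt (fun z : ℂ => ((1-a : ℝ) : ℂ) * z) ((1-a : ℝ) : ℂ) w := by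
    simpa using (hasDerivAt_id w).const_mul (((1-a : ℝ) : ℂ))
  exact (hlin.add hlog).sub_const (((Real.log 2 : ℝ) : ℂ))

lemma Lf_deriv_im_neg (ha0 : 0 < a) (ha1 : a < 1) (hw0 : 0 < w.im)
    (hw1 : w.im < Real.pi / (1 + a)) :
    (((1-a : ℝ) : ℂ) + Complex.exp (((2*a : ℝ) : ℂ) * w) * ((2*a : ℝ) : ℂ)
        / (Complex.exp (((2*a : ℝ) : ℂ) * w) - 1)).im < 0 := by
  set E := Complex.exp (((2*a : ℝ) : ℂ) * w) with hE
  have hEim : 0 < E.im := E_im_pos ha0 ha1 hw0 hw1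
  have hX0 : E - 1 ≠ 0 := X_ne_zero ha0 ha1 hw0 hw1
  have hnsq : 0 < Complex.normSq (E - 1) := Complex.normSq_pos.mpr hX0
  have hdiv : (E * ((2*a : ℝ) : ℂ) / (E - 1)).im
      = -(2 * a * E.im) / Complex.normSq (E - 1) := by
    rw [Complex.div_im]
    simp [Complex.mul_re, Complex.mul_im, Complex.sub_re, Complex.sub_im]
    ring
  have : (((1-a : ℝ) : ℂ) + E * ((2*a : ℝ) : ℂ) / (E - 1)).im
      = -(2 * a * E.im) / Complex.normSq (E - 1) := by
    rw [Complex.add_im, hdiv, Complex.ofReal_im, zero_add]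
  rw [this]
  apply div_neg_of_neg_of_pos _ hnsq
  nlinarith

lemma Lf_im_mem (ha0 : 0 < a) (ha1 : a < 1) (hw0 : 0 < w.im)
    (hw1 : w.im < Real.pi / (1 + a)) :
    0 < (Lf a w).im ∧ (Lf a w).im < 2 * Real.pi := by
  have harg : (Lf a w).im = (1-a) * w.im
      + Complex.arg (Complex.exp (((2*a : ℝ) : ℂ) * w) - 1) := by
    simp [Lf, Complex.add_im, Complex.sub_im, Complex.log_im, Complex.mul_im,
      Complex.ofReal_re, Complex.ofReal_im]
  have hXim := X_im_pos ha0 ha1 hw0 hw1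
  have harg0 : 0 < Complex.arg (Complex.exp (((2*a : ℝ) : ℂ) * w) - 1) := by
    rcases lt_or_eq_of_le (Complex.arg_nonneg_iff.mpr hXim.le) with h | h
    · exact h
    · exfalso
      have := Complex.arg_eq_zero_iff.mp h.symm
      exact hXim.ne' this.2
  have hargpi : Complex.arg (Complex.exp (((2*a : ℝ) : ℂ) * w) - 1) ≤ Real.pi :=
    Complex.arg_le_pi _
  have hq : 0 < 1 - a := by linarith
  have hwim : (1-a) * w.im < Real.pi := by
    have : (1-a) * w.im < 2 * a * w.im + (1-a) * w.im := by nlinarith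
    calc (1-a) * w.im < (1+a) * w.im := by nlinarith
      _ < (1+a) * (Real.pi / (1+a)) := by
          apply mul_lt_mul_of_pos_left hw1 (by linarith)
      _ = Real.pi := by field_simp
  constructor
  · rw [harg]; positivity
  · rw [harg]; linarith [Real.pi_pos]

lemma injOn_of_deriv_im_neg {S : Set ℂ} (hconv : Convex ℝ S) {L L' : ℂ → ℂ}
    (hd : ∀ w ∈ S, HasDerivAt L (L' w) w) (hcont : ContinuousOn L' S)
    (hneg : ∀ w ∈ S, (L' w).im < 0) : Set.InjOn L S := by
  intro w1 h1 w2 h2 heq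
  by_contra hne
  set γ : ℝ → ℂ := fun t => w1 + t • (w2 - w1) with hγ
  have hγeq : ∀ t : ℝ, γ t = (1 - t) • w1 + t • w2 := by
    intro t
    simp only [hγ, Complex.real_smul]
    push_cast
    ring
  have hseg : ∀ t ∈ Set.Icc (0:ℝ) 1, γ t ∈ S := by
    intro t ht
    rw [hγeq]
    exact hconv h1 h2 (by linarith [ht.1, ht.2]) ht.1 (by ring)
  have hγcont : Continuous γ := by
    apply continuous_const.add
    exact (continuous_id.smul continuous_const)
  have hγd : ∀ t : ℝ, HasDerivAt γ (w2 - w1) t := by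
    intro t
    simpa [hγ] using ((hasDerivAt_id t).smul_const (w2 - w1)).const_add w1
  have hφd : ∀ t ∈ Set.uIcc (0:ℝ) 1,
      HasDerivAt (L ∘ γ) ((w2 - w1) • L' (γ t)) t := by
    intro t ht
    rw [Set.uIcc_of_le (by norm_num : (0:ℝ) ≤ 1)] at ht
    exact (hd (γ t) (hseg t ht)).scomp t (hγd t)
  have hψcont : ContinuousOn (fun t => (w2 - w1) • L' (γ t)) (Set.uIcc (0:ℝ) 1) := by
    rw [Set.uIcc_of_le (by norm_num : (0:ℝ) ≤ 1)]
    exact ((hcont.comp hγcont.continuousOn hseg).const_smul (w2 - w1))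
  have hψint : IntervalIntegrable (fun t => (w2 - w1) • L' (γ t)) MeasureTheory.volume 0 1 :=
    hψcont.intervalIntegrable
  have hFTC : ∫ t in (0:ℝ)..1, (w2 - w1) • L' (γ t)
      = L (γ 1) - L (γ 0) := by
    have := intervalIntegral.integral_eq_sub_of_hasDerivAt hφd hψint
    simpa using this
  have hγ0 : γ 0 = w1 := by simp [hγ]
  have hγ1 : γ 1 = w2 := by simp [hγ]
  rw [hγ0, hγ1, heq, sub_self] at hFTC
  rw [intervalIntegral.integral_smul] at hFTC
  have hI : ∫ t in (0:ℝ)..1, L' (γ t) = 0 := by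
    rcases smul_eq_zero.mp hFTC with h | h
    · exact absurd (sub_eq_zero.mp h) (Ne.symm hne)
    · exact h
  have hIint : IntervalIntegrable (fun t => L' (γ t)) MeasureTheory.volume 0 1 := by
    apply ContinuousOn.intervalIntegrable
    rw [Set.uIcc_of_le (by norm_num : (0:ℝ) ≤ 1)]
    exact hcont.comp hγcont.continuousOn hseg
  have hIm : ∫ t in (0:ℝ)..1, (L' (γ t)).im = 0 := by
    have := Complex.imCLM.intervalIntegral_comp_comm hIint
    simp only [Complex.imCLM_apply] at this
    rw [this, hI]
    simp
  have hpos : 0 < ∫ t in (0:ℝ)..1, -(L' (γ t)).im := by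
    apply intervalIntegral.intervalIntegral_pos_of_pos_on
    · apply ContinuousOn.intervalIntegrable
      rw [Set.uIcc_of_le (by norm_num : (0:ℝ) ≤ 1)]
      exact ((Complex.continuous_im.comp_continuousOn
        (hcont.comp hγcont.continuousOn hseg))).neg
    · intro t ht
      have := hneg (γ t) (hseg t ⟨ht.1.le, ht.2.le⟩)
      linarith
    · norm_num
  rw [intervalIntegral.integral_neg, hIm] at hpos
  simp at hpos

def Sset (a : ℝ) : Set ℂ := {w : ℂ | 0 < w.im ∧ w.im < Real.pi / (1 + a)}

def Up (a : ℝ) : Set ℂ := {w : ℂ | 0 < w.im ∧ w.im < Real.pi / (1 + a) ∧ 0 < (Fc a w).im}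

lemma Up_subset_Sset (a : ℝ) : Up a ⊆ Sset a := fun w hw => ⟨hw.1, hw.2.1⟩

lemma convex_Sset (a : ℝ) : Convex ℝ (Sset a) := by
  have : Sset a = {w : ℂ | 0 < w.im} ∩ {w : ℂ | w.im < Real.pi / (1 + a)} := rfl
  rw [this]
  exact (convex_halfSpace_im_gt 0).inter (convex_halfSpace_im_lt _)

lemma injOn_Lf (ha0 : 0 < a) (ha1 : a < 1) : Set.InjOn (Lf a) (Sset a) := by
  apply injOn_of_deriv_im_neg (convex_Sset a)
    (L' := fun w => ((1-a : ℝ) : ℂ) + Complex.exp (((2*a : ℝ) : ℂ) * w) * ((2*a : ℝ) : ℂ)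
      / (Complex.exp (((2*a : ℝ) : ℂ) * w) - 1))
  · exact fun w hw => hasDerivAt_Lf ha0 ha1 hw.1 hw.2
  · apply ContinuousOn.add continuousOn_const
    apply ContinuousOn.div
    · exact (Continuous.comp Complex.continuous_exp (continuous_const.mul continuous_id)).continuousOn.mul continuousOn_const
    · exact ((Continuous.comp Complex.continuous_exp (continuous_const.mul continuous_id)).sub continuous_const).continuousOn
    · exact fun w hw => X_ne_zero ha0 ha1 hw.1 hw.2
  · exact fun w hw => Lf_deriv_im_neg ha0 ha1 hw.1 hw.2

lemma Lf_im_lt_pi (ha0 : 0 < a) (ha1 : a < 1) (hw : w ∈ Up a) : (Lf a w).im < Real.pi := by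
  obtain ⟨hw0, hw1, hwF⟩ := hw
  have hX0 := X_ne_zero ha0 ha1 hw0 hw1
  have hexp : Complex.exp (Lf a w) = Fc a w := exp_Lf a w hX0
  have him : (Fc a w).im = Real.exp ((Lf a w).re) * Real.sin ((Lf a w).im) := by
    rw [← hexp, Complex.exp_im]
  have hsin : 0 < Real.sin ((Lf a w).im) := by
    rw [him] at hwF
    by_contra h
    push_neg at h
    nlinarith [Real.exp_pos ((Lf a w).re)]
  obtain ⟨hL0, hL2⟩ := Lf_im_mem ha0 ha1 hw0 hw1
  by_contra h
  push_neg at h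
  have : Real.sin ((Lf a w).im) ≤ 0 := by
    have h1 : Real.sin ((Lf a w).im - Real.pi + Real.pi) = -Real.sin ((Lf a w).im - Real.pi) :=
      Real.sin_add_pi _
    rw [sub_add_cancel] at h1
    rw [h1]
    simp only [neg_nonpos]
    apply Real.sin_nonneg_of_nonneg_of_le_pi <;> linarith
  linarith

lemma injOn_Fc_Up (ha0 : 0 < a) (ha1 : a < 1) : Set.InjOn (Fc a) (Up a) := by
  intro w1 h1 w2 h2 heq
  have hX1 := X_ne_zero ha0 ha1 h1.1 h1.2.1
  have hX2 := X_ne_zero ha0 ha1 h2.1 h2.2.1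
  have hexp : Complex.exp (Lf a w1) = Complex.exp (Lf a w2) := by
    rw [exp_Lf a w1 hX1, exp_Lf a w2 hX2, heq]
  obtain ⟨n, hn⟩ := Complex.exp_eq_exp_iff_exists_int.mp hexp
  have him : (Lf a w1).im = (Lf a w2).im + (n : ℝ) * (2 * Real.pi) := by
    have := congrArg Complex.im hn
    simpa [Complex.add_im, Complex.mul_im, Complex.mul_re] using this
  have hb1 := Lf_im_mem ha0 ha1 h1.1 h1.2.1
  have hb2 := Lf_im_mem ha0 ha1 h2.1 h2.2.1
  have hp1 := Lf_im_lt_pi ha0 ha1 h1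
  have hp2 := Lf_im_lt_pi ha0 ha1 h2
  have hn0 : n = 0 := by
    by_contra hne
    have h1n : (1 : ℝ) ≤ |(n : ℝ)| := by
      rw [← Int.cast_abs]
      exact_mod_cast Int.one_le_abs (by exact_mod_cast hne)
    have : |(n : ℝ) * (2 * Real.pi)| < Real.pi := by
      rw [abs_lt]
      constructor <;> nlinarith [hb1.1, hb2.1, hp1, hp2]
    rw [abs_mul, abs_of_pos (by positivity : (0:ℝ) < 2 * Real.pi)] at this
    nlinarith [Real.pi_pos]
  rw [hn0] at hn
  simp at hn
  exact injOn_Lf ha0 ha1 (Up_subset_Sset a h1) (Up_subset_Sset a h2) hn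

lemma continuous_Fc (a : ℝ) : Continuous (Fc a) := by
  unfold Fc
  fun_prop

lemma isOpen_Up (a : ℝ) : IsOpen (Up a) := by
  have h1 : IsOpen {w : ℂ | 0 < w.im} := isOpen_lt continuous_const Complex.continuous_im
  have h2 : IsOpen {w : ℂ | w.im < Real.pi / (1 + a)} :=
    isOpen_lt Complex.continuous_im continuous_const
  have h3 : IsOpen {w : ℂ | 0 < (Fc a w).im} :=
    isOpen_lt continuous_const (Complex.continuous_im.comp (continuous_Fc a))
  have : Up a = ({w : ℂ | 0 < w.im} ∩ {w : ℂ | w.im < Real.pi / (1 + a)}) ∩ {w : ℂ | 0 < (Fc a w).im} := by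
    ext w; simp [Up, and_assoc]
  rw [this]
  exact ((h1.inter h2).inter h3)

lemma hasStrictDerivAt_Fc (a : ℝ) (w : ℂ) :
    HasStrictDerivAt (Fc a)
      ((((1+a : ℝ) : ℂ) * Complex.exp (((1+a : ℝ) : ℂ) * w)
        - ((1-a : ℝ) : ℂ) * Complex.exp (((1-a : ℝ) : ℂ) * w)) / 2) w := by
  have h1 : HasStrictDerivAt (fun z : ℂ => Complex.exp (((1+a : ℝ) : ℂ) * z))
      (Complex.exp (((1+a : ℝ) : ℂ) * w) * ((1+a : ℝ) : ℂ)) w := by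
    simpa using ((hasStrictDerivAt_id w).const_mul (((1+a : ℝ) : ℂ))).cexp
  have h2 : HasStrictDerivAt (fun z : ℂ => Complex.exp (((1-a : ℝ) : ℂ) * z))
      (Complex.exp (((1-a : ℝ) : ℂ) * w) * ((1-a : ℝ) : ℂ)) w := by
    simpa using ((hasStrictDerivAt_id w).const_mul (((1-a : ℝ) : ℂ))).cexp
  have := (h1.sub h2).div_const (2 : ℂ)
  rw [show ((((1+a : ℝ) : ℂ) * Complex.exp (((1+a : ℝ) : ℂ) * w)
        - ((1-a : ℝ) : ℂ) * Complex.exp (((1-a : ℝ) : ℂ) * w)) / 2)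
      = (Complex.exp (((1+a : ℝ) : ℂ) * w) * ((1+a : ℝ) : ℂ)
        - Complex.exp (((1-a : ℝ) : ℂ) * w) * ((1-a : ℝ) : ℂ)) / 2 by ring]
  exact this

lemma Fc_deriv_ne_zero (ha0 : 0 < a) (ha1 : a < 1) (hw0 : 0 < w.im)
    (hw1 : w.im < Real.pi / (1 + a)) :
    ((((1+a : ℝ) : ℂ) * Complex.exp (((1+a : ℝ) : ℂ) * w)
        - ((1-a : ℝ) : ℂ) * Complex.exp (((1-a : ℝ) : ℂ) * w)) / 2) ≠ 0 := by
  intro h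
  have heq : ((1+a : ℝ) : ℂ) * Complex.exp (((1+a : ℝ) : ℂ) * w)
      = ((1-a : ℝ) : ℂ) * Complex.exp (((1-a : ℝ) : ℂ) * w) := by
    rw [div_eq_zero_iff] at h
    rcases h with h | h
    · exact sub_eq_zero.mp h
    · norm_num at h
  have hp : ((1+a : ℝ) : ℂ) ≠ 0 := by
    simp only [ne_eq, Complex.ofReal_eq_zero]
    intro h'; norm_num at h'; linarith
  have hq : Complex.exp (((1-a : ℝ) : ℂ) * w) ≠ 0 := Complex.exp_ne_zero _
  have hE : Complex.exp (((2*a : ℝ) : ℂ) * w)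
      = ((1-a : ℝ) : ℂ) / ((1+a : ℝ) : ℂ) := by
    have h2 : Complex.exp (((2*a : ℝ) : ℂ) * w)
        = Complex.exp (((1+a : ℝ) : ℂ) * w) / Complex.exp (((1-a : ℝ) : ℂ) * w) := by
      rw [← Complex.exp_sub]
      congr 1
      push_cast
      ring
    rw [h2]
    rw [div_eq_div_iff (Complex.exp_ne_zero _) hp]
    linear_combination heq
  have him : (Complex.exp (((2*a : ℝ) : ℂ) * w)).im = 0 := by
    rw [hE]
    rw [show ((1-a : ℝ) : ℂ) / ((1+a : ℝ) : ℂ) = (((1-a)/(1+a) : ℝ) : ℂ) by push_cast; ring]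
    exact Complex.ofReal_im _
  exact absurd him (ne_of_gt (E_im_pos ha0 ha1 hw0 hw1))

lemma isOpen_Fc_image (ha0 : 0 < a) (ha1 : a < 1) : IsOpen (Fc a '' Up a) := by
  rw [isOpen_iff_mem_nhds]
  rintro z ⟨w, hw, rfl⟩
  have hmap := (hasStrictDerivAt_Fc a w).map_nhds_eq (Fc_deriv_ne_zero ha0 ha1 hw.1 hw.2.1)
  rw [← hmap]
  exact Filter.image_mem_map ((isOpen_Up a).mem_nhds hw)

lemma re_coe_mul (c : ℝ) (w : ℂ) : (((c : ℝ) : ℂ) * w).re = c * w.re := by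
  simp [Complex.mul_re]

lemma abs_Fc_le (a : ℝ) (w : ℂ) : ‖Fc a w‖
    ≤ (Real.exp ((1+a) * w.re) + Real.exp ((1-a) * w.re)) / 2 := by
  rw [Fc, norm_div]
  simp only [Complex.norm_ofNat]
  apply div_le_div_of_nonneg_right ?_ (by norm_num)
  calc ‖Complex.exp (((1+a : ℝ) : ℂ) * w) - Complex.exp (((1-a : ℝ) : ℂ) * w)‖
      ≤ ‖Complex.exp (((1+a : ℝ) : ℂ) * w)‖
        + ‖Complex.exp (((1-a : ℝ) : ℂ) * w)‖ := by
        apply norm_sub_le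
    _ = Real.exp ((1+a) * w.re) + Real.exp ((1-a) * w.re) := by
        rw [Complex.norm_exp, Complex.norm_exp, re_coe_mul, re_coe_mul]

lemma le_abs_Fc (a : ℝ) (w : ℂ) :
    (Real.exp ((1+a) * w.re) - Real.exp ((1-a) * w.re)) / 2 ≤ ‖Fc a w‖ := by
  rw [Fc, norm_div]
  simp only [Complex.norm_ofNat]
  apply div_le_div_of_nonneg_right ?_ (by norm_num)
  calc Real.exp ((1+a) * w.re) - Real.exp ((1-a) * w.re)
      = ‖Complex.exp (((1+a : ℝ) : ℂ) * w)‖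
        - ‖Complex.exp (((1-a : ℝ) : ℂ) * w)‖ := by
        rw [Complex.norm_exp, Complex.norm_exp, re_coe_mul, re_coe_mul]
    _ ≤ ‖Complex.exp (((1+a : ℝ) : ℂ) * w) - Complex.exp (((1-a : ℝ) : ℂ) * w)‖ := by
        exact norm_sub_norm_le _ _

lemma Fc_image_closed (ha0 : 0 < a) (ha1 : a < 1) {z : ℂ} (hz : 0 < z.im)
    (hcl : z ∈ closure (Fc a '' Up a)) : z ∈ Fc a '' Up a := by
  obtain ⟨u, hu, hlim⟩ := mem_closure_iff_seq_limit.mp hcl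
  choose w hwUp hwF using hu
  have hz0 : z ≠ 0 := by
    intro h; rw [h] at hz; simp at hz
  have habs : 0 < ‖z‖ := norm_pos_iff.mpr hz0
  set δ := ‖z‖ / 2 with hδdef
  set C := ‖z‖ + 1 with hCdef
  have hδ : 0 < δ := by positivity
  have hC : 0 < C := by positivity
  have hlima : Filter.Tendsto (fun n => ‖u n‖) Filter.atTop (𝓝 ‖z‖) :=
    (continuous_norm.tendsto z).comp hlim
  have hev1 : ∀ᶠ n in Filter.atTop, δ < ‖u n‖ :=
    hlima.eventually_const_lt (by rw [hδdef]; linarith)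
  have hev2 : ∀ᶠ n in Filter.atTop, ‖u n‖ < C :=
    hlima.eventually_lt_const (by rw [hCdef]; linarith)
  set m := min 0 (Real.log δ / (1 - a)) with hmdef
  set M := max 0 (Real.log (2*C+1) / (2*a)) with hMdef
  set c := Real.pi / (1+a) with hcdef
  have hcpos : 0 < c := by rw [hcdef]; positivity
  set K := {v : ℂ | v.re ∈ Set.Icc m M ∧ v.im ∈ Set.Icc 0 c} with hKdef
  have hKcomp : IsCompact K := by
    apply Metric.isCompact_of_isClosed_isBounded
    · exact (isClosed_Icc.preimage Complex.continuous_re).inter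
        (isClosed_Icc.preimage Complex.continuous_im)
    · rw [Metric.isBounded_iff_subset_closedBall 0]
      refine ⟨|m| + |M| + (|c| + 1), fun v hv => ?_⟩
      rw [Metric.mem_closedBall, Complex.dist_eq, sub_zero]
      have h1 := Complex.norm_le_abs_re_add_abs_im v
      obtain ⟨⟨h2, h3⟩, h4, h5⟩ := hv
      have hre : |v.re| ≤ |m| + |M| := by
        rw [abs_le]
        constructor
        · calc -(|m| + |M|) ≤ -|m| := by
                have := abs_nonneg M; linarith
            _ ≤ m := neg_abs_le m
            _ ≤ v.re := h2
        · calc v.re ≤ M := h3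
            _ ≤ |M| := le_abs_self M
            _ ≤ |m| + |M| := by have := abs_nonneg m; linarith
      have him : |v.im| ≤ |c| := by
        rw [abs_le]
        constructor
        · calc -|c| ≤ 0 := by have := abs_nonneg c; linarith
            _ ≤ v.im := h4
        · exact h5.trans (le_abs_self c)
      linarith
  have hevK : ∀ᶠ n in Filter.atTop, w n ∈ K := by
    filter_upwards [hev1, hev2] with n h1 h2
    have hle := le_abs_Fc a (w n)
    have hge := abs_Fc_le a (w n)
    rw [hwF n] at hle hge
    set ξ := (w n).re with hξdef
    constructor
    · constructor
      · -- lower bound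
        rcases le_or_gt 0 ξ with h | h
        · exact le_trans (min_le_left _ _) h
        · have hexple : Real.exp ((1+a) * ξ) ≤ Real.exp ((1-a) * ξ) := by
            apply Real.exp_le_exp.mpr
            nlinarith
          have : δ < Real.exp ((1-a) * ξ) := by linarith
          have hlog : Real.log δ ≤ (1-a) * ξ :=
            (Real.log_le_iff_le_exp hδ).mpr this.le
          have : Real.log δ / (1-a) ≤ ξ := by
            rw [div_le_iff₀ (by linarith : (0:ℝ) < 1 - a)]
            linarith [hlog]
          exact le_trans (min_le_right _ _) this
      · -- upper bound
        rcases le_or_gt ξ 0 with h | h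
        · exact le_trans h (le_max_left _ _)
        · have hsplit : Real.exp ((1+a) * ξ) = Real.exp ((1-a) * ξ) * Real.exp (2*a*ξ) := by
            rw [← Real.exp_add]; congr 1; ring
          have h1exp : (1:ℝ) ≤ Real.exp ((1-a) * ξ) :=
            Real.one_le_exp (by nlinarith)
          have h2exp : (1:ℝ) ≤ Real.exp (2*a*ξ) :=
            Real.one_le_exp (by nlinarith)
          have key : Real.exp (2*a*ξ) ≤ 2*C + 1 := by nlinarith
          have hlog : 2*a*ξ ≤ Real.log (2*C+1) := by
            rw [← Real.log_exp (2*a*ξ)]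
            exact Real.log_le_log (by positivity) key
          have : ξ ≤ Real.log (2*C+1) / (2*a) := by
            rw [le_div_iff₀ (by positivity : (0:ℝ) < 2*a)]
            linarith
          exact le_trans this (le_max_right _ _)
    · exact ⟨(hwUp n).1.le, (hwUp n).2.1.le⟩
  obtain ⟨v, hvK, φ, hφ, hvlim⟩ := hKcomp.tendsto_subseq' hevK.frequently
  have hFv : Fc a v = z := by
    have h1 : Filter.Tendsto (fun k => Fc a (w (φ k))) Filter.atTop (𝓝 (Fc a v)) :=
      ((continuous_Fc a).tendsto v).comp hvlim
    have h2 : Filter.Tendsto (fun k => Fc a (w (φ k))) Filter.atTop (𝓝 z) := by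
      have h3 := hlim.comp hφ.tendsto_atTop
      have : (fun k => Fc a (w (φ k))) = u ∘ φ := by
        funext k; exact hwF (φ k)
      rw [this]
      exact h3
    exact tendsto_nhds_unique h1 h2
  have hvim0 : 0 < v.im := by
    rcases lt_or_eq_of_le hvK.2.1 with h | h
    · exact h
    · exfalso
      have : (Fc a v).im = 0 := by
        rw [Fc_im, ← h]
        simp
      rw [hFv] at this
      linarith
  have hvim1 : v.im < c := by
    rcases lt_or_eq_of_le hvK.2.2 with h | h
    · exact h
    · exfalso
      have hsin1 : Real.sin ((1+a) * v.im) = 0 := by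
        rw [h, hcdef]
        rw [mul_div_cancel₀ _ (by linarith : (1:ℝ)+a ≠ 0)]
        exact Real.sin_pi
      have hsin2 : 0 < Real.sin ((1-a) * v.im) := by
        apply Real.sin_pos_of_pos_of_lt_pi
        · rw [h]; nlinarith
        · rw [h, hcdef]
          rw [div_eq_inv_mul, ← mul_assoc]
          calc (1-a) * (1+a)⁻¹ * Real.pi < 1 * Real.pi := by
                apply mul_lt_mul_of_pos_right _ Real.pi_pos
                rw [mul_inv_lt_iff₀ (by linarith)]
                linarith
            _ = Real.pi := one_mul _
      have : (Fc a v).im < 0 := by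
        rw [Fc_im, hsin1]
        have := Real.exp_pos ((1-a) * v.re)
        nlinarith
      rw [hFv] at this
      linarith
  exact ⟨v, ⟨hvim0, hvim1, by rw [hFv]; exact hz⟩, hFv⟩

lemma w0_mem_Up (ha0 : 0 < a) (ha1 : a < 1) :
    Complex.mk 1 (Real.pi / (2*(1+a))) ∈ Up a := by
  have hπ := Real.pi_pos
  have him : (Complex.mk 1 (Real.pi / (2*(1+a)))).im = Real.pi / (2*(1+a)) := rfl
  have hre : (Complex.mk 1 (Real.pi / (2*(1+a)))).re = 1 := rfl
  refine ⟨by rw [him]; positivity, ?_, ?_⟩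
  · rw [him]
    rw [div_lt_div_iff₀ (by positivity) (by positivity)]
    nlinarith
  · rw [Fc_im, him, hre]
    have h1 : (1+a) * (Real.pi / (2*(1+a))) = Real.pi / 2 := by
      field_simp
    rw [h1, Real.sin_pi_div_two]
    have h2 : Real.sin ((1-a) * (Real.pi / (2*(1+a)))) ≤ 1 := Real.sin_le_one _
    have h3 : Real.exp ((1-a) * 1) < Real.exp ((1+a) * 1) := by
      apply Real.exp_lt_exp.mpr
      nlinarith
    have h4 := Real.exp_pos ((1-a) * 1)
    have h5 : Real.exp ((1-a)*1) * Real.sin ((1-a) * (Real.pi / (2*(1+a)))) ≤ Real.exp ((1-a)*1) := by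
      nlinarith [Real.exp_pos ((1-a)*1)]
    nlinarith

lemma Fc_image_Up (ha0 : 0 < a) (ha1 : a < 1) : Fc a '' Up a = {z : ℂ | 0 < z.im} := by
  apply Set.Subset.antisymm
  · rintro _ ⟨w, hw, rfl⟩
    exact hw.2.2
  · intro z hz
    by_contra hz2
    have hH : IsPreconnected {z : ℂ | 0 < z.im} := (convex_halfSpace_im_gt 0).isPreconnected
    have hu : IsOpen (Fc a '' Up a) := isOpen_Fc_image ha0 ha1
    have hv : IsOpen (closure (Fc a '' Up a))ᶜ := isClosed_closure.isOpen_compl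
    have hsub : {z : ℂ | 0 < z.im} ⊆ (Fc a '' Up a) ∪ (closure (Fc a '' Up a))ᶜ := by
      intro z' hz'
      by_cases h : z' ∈ closure (Fc a '' Up a)
      · exact Or.inl (Fc_image_closed ha0 ha1 hz' h)
      · exact Or.inr h
    have hne1 : ({z : ℂ | 0 < z.im} ∩ (Fc a '' Up a)).Nonempty := by
      refine ⟨Fc a (Complex.mk 1 (Real.pi / (2*(1+a)))), ?_, Set.mem_image_of_mem _ (w0_mem_Up ha0 ha1)⟩
      exact (w0_mem_Up ha0 ha1).2.2
    have hne2 : ({z : ℂ | 0 < z.im} ∩ (closure (Fc a '' Up a))ᶜ).Nonempty := by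
      refine ⟨z, hz, fun h => hz2 (Fc_image_closed ha0 ha1 hz h)⟩
    obtain ⟨y, _, hy1, hy2⟩ := hH _ _ hu hv hsub hne1 hne2
    exact hy2 (subset_closure hy1)

noncomputable def G (a : ℝ) (ξ : ℝ) : ℝ := Real.sinh (a*ξ) * Real.exp ξ

lemma Fc_ofReal (a : ℝ) (ξ : ℝ) : Fc a ((ξ : ℝ) : ℂ) = ((G a ξ : ℝ) : ℂ) := by
  rw [← Fc_eq, G]
  push_cast
  rfl

lemma hasDerivAt_G (a : ℝ) (ξ : ℝ) :
    HasDerivAt (G a) (Real.cosh (a*ξ) * a * Real.exp ξ + Real.sinh (a*ξ) * Real.exp ξ) ξ := by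
  have h1 : HasDerivAt (fun ξ : ℝ => a * ξ) a ξ := by
    simpa using (hasDerivAt_id ξ).const_mul a
  have h2 : HasDerivAt (fun ξ : ℝ => Real.sinh (a*ξ)) (Real.cosh (a*ξ) * a) ξ :=
    (Real.hasDerivAt_sinh (a*ξ)).comp ξ h1
  exact h2.mul (Real.hasDerivAt_exp ξ)

lemma continuous_G (a : ℝ) : Continuous (G a) := by
  unfold G
  fun_prop

lemma G_deriv_pos (ha0 : 0 < a) (ha1 : a < 1) {ξa : ℝ}
    (hξa : ξa = (1 / (2 * a)) * Real.log ((1 - a) / (1 + a))) {ξ : ℝ} (hξ : ξa < ξ) :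
    0 < Real.cosh (a*ξ) * a * Real.exp ξ + Real.sinh (a*ξ) * Real.exp ξ := by
  have hr : (0:ℝ) < (1 - a) / (1 + a) := by
    apply div_pos <;> linarith
  have hkey : (1 - a) / (1 + a) < Real.exp (2 * a * ξ) := by
    have h1 : Real.log ((1 - a) / (1 + a)) < 2 * a * ξ := by
      have h2 : Real.log ((1 - a) / (1 + a)) = 2 * a * ξa := by
        rw [hξa]; field_simp
      rw [h2]
      nlinarith
    calc (1 - a) / (1 + a) = Real.exp (Real.log ((1 - a) / (1 + a))) :=
          (Real.exp_log hr).symm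
      _ < Real.exp (2 * a * ξ) := Real.exp_lt_exp.mpr h1
  have hsinh : Real.sinh (a*ξ) = (Real.exp (a*ξ) - Real.exp (-(a*ξ))) / 2 := Real.sinh_eq _
  have hcosh : Real.cosh (a*ξ) = (Real.exp (a*ξ) + Real.exp (-(a*ξ))) / 2 := Real.cosh_eq _
  have hfac : Real.cosh (a*ξ) * a + Real.sinh (a*ξ)
      = Real.exp (-(a*ξ)) * ((1+a) * Real.exp (2*a*ξ) - (1-a)) / 2 := by
    rw [hsinh, hcosh]
    have hsplit : Real.exp (a*ξ) = Real.exp (-(a*ξ)) * Real.exp (2*a*ξ) := by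
      rw [← Real.exp_add]; congr 1; ring
    rw [hsplit]
    ring
  have hpos : 0 < (1+a) * Real.exp (2*a*ξ) - (1-a) := by
    have : (1-a) < (1+a) * Real.exp (2*a*ξ) := by
      rw [div_lt_iff₀ (by linarith : (0:ℝ) < 1+a)] at hkey
      linarith [hkey]
    linarith
  have hexp := Real.exp_pos ξ
  have hexp2 := Real.exp_pos (-(a*ξ))
  have : 0 < Real.cosh (a*ξ) * a + Real.sinh (a*ξ) := by
    rw [hfac]; positivity
  nlinarith

lemma G_strictMonoOn (ha0 : 0 < a) (ha1 : a < 1) {ξa : ℝ}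
    (hξa : ξa = (1 / (2 * a)) * Real.log ((1 - a) / (1 + a))) :
    StrictMonoOn (G a) (Set.Ici ξa) := by
  apply strictMonoOn_of_deriv_pos (convex_Ici ξa) (continuous_G a).continuousOn
  intro ξ hξ
  rw [interior_Ici] at hξ
  rw [(hasDerivAt_G a ξ).deriv]
  exact G_deriv_pos ha0 ha1 hξa hξ

lemma G_at_ξa (ha0 : 0 < a) (ha1 : a < 1) {ξa xa : ℝ}
    (hξa : ξa = (1 / (2 * a)) * Real.log ((1 - a) / (1 + a)))
    (hxa : xa = -(a / (1 + a)) * ((1 - a) / (1 + a)) ^ ((1 - a) / (2 * a))) :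
    G a ξa = xa := by
  set r := (1 - a) / (1 + a) with hrdef
  have hr : (0:ℝ) < r := by apply div_pos <;> linarith
  set l := Real.log r with hldef
  have hel : Real.exp l = r := Real.exp_log hr
  have haξa : a * ξa = l / 2 := by rw [hξa]; field_simp
  have hξa' : ξa = l / (2*a) := by rw [hξa]; ring
  have hxa' : xa = -(a / (1 + a)) * Real.exp (l * ((1 - a) / (2 * a))) := by
    rw [hxa, Real.rpow_def_of_pos hr]
  rw [G, haξa, hξa', Real.sinh_eq, hxa']
  have e1 : Real.exp (l/2) * Real.exp (l/(2*a)) = Real.exp l * Real.exp (l * ((1-a)/(2*a))) := by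
    rw [← Real.exp_add, ← Real.exp_add]
    congr 1
    field_simp
    ring
  have e2 : Real.exp (-(l/2)) * Real.exp (l/(2*a)) = Real.exp (l * ((1-a)/(2*a))) := by
    rw [← Real.exp_add]
    congr 1
    field_simp
    ring
  have expand : (Real.exp (l/2) - Real.exp (-(l/2))) / 2 * Real.exp (l/(2*a))
      = (Real.exp (l/2) * Real.exp (l/(2*a)) - Real.exp (-(l/2)) * Real.exp (l/(2*a)))/2 := by
    ring
  rw [expand, e1, e2, hel]
  have : r - 1 = -(2*a/(1+a)) := by
    rw [hrdef]; field_simp; ring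
  have goal : (r * Real.exp (l * ((1-a)/(2*a))) - Real.exp (l * ((1-a)/(2*a)))) / 2
      = (r - 1)/2 * Real.exp (l * ((1-a)/(2*a))) := by ring
  rw [goal, this]
  ring

lemma G_surj (ha0 : 0 < a) (ha1 : a < 1) {ξa xa : ℝ}
    (hξa : ξa = (1 / (2 * a)) * Real.log ((1 - a) / (1 + a)))
    (hxa : xa = -(a / (1 + a)) * ((1 - a) / (1 + a)) ^ ((1 - a) / (2 * a)))
    {x : ℝ} (hx : xa < x) : ∃ ξ, ξa < ξ ∧ G a ξ = x := by
  have hsinh : Filter.Tendsto Real.sinh Filter.atTop Filter.atTop := by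
    apply Filter.tendsto_atTop_mono' _ (_ : ∀ᶠ ξ in Filter.atTop, (Real.exp ξ - 1)/2 ≤ Real.sinh ξ)
    · have h1 : Filter.Tendsto (fun ξ : ℝ => Real.exp ξ - 1) Filter.atTop Filter.atTop :=
        Filter.tendsto_atTop_add_const_right _ (-1) Real.tendsto_exp_atTop
      exact h1.atTop_div_const (by norm_num)
    · filter_upwards [Filter.eventually_ge_atTop (0:ℝ)] with ξ hξ
      rw [Real.sinh_eq]
      have : Real.exp (-ξ) ≤ 1 := Real.exp_le_one_iff.mpr (by linarith)
      linarith
  have hcomp : Filter.Tendsto (fun ξ : ℝ => Real.sinh (a * ξ)) Filter.atTop Filter.atTop :=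
    hsinh.comp (Filter.Tendsto.const_mul_atTop ha0 Filter.tendsto_id)
  have htop : Filter.Tendsto (G a) Filter.atTop Filter.atTop :=
    Filter.Tendsto.atTop_mul_atTop₀ hcomp Real.tendsto_exp_atTop
  obtain ⟨b, hb⟩ := ((htop.eventually_ge_atTop x).and (Filter.eventually_ge_atTop ξa)).exists
  obtain ⟨hbx, hbξ⟩ := hb
  have hG := G_at_ξa ha0 ha1 hξa hxa
  have hmem : x ∈ Set.Icc (G a ξa) (G a b) := ⟨by rw [hG]; exact hx.le, hbx⟩
  obtain ⟨ξ, hξmem, hGξ⟩ := intermediate_value_Icc hbξ (continuous_G a).continuousOn hmem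
  refine ⟨ξ, ?_, hGξ⟩
  rcases lt_or_eq_of_le hξmem.1 with h | h
  · exact h
  · exfalso
    rw [← h, hG] at hGξ
    linarith [hGξ ▸ hx]

lemma eq_ofReal_of_im_zero {w : ℂ} (h : w.im = 0) : w = ((w.re : ℝ) : ℂ) :=
  Complex.ext rfl (by simp [h])

lemma up_set_eq (a : ℝ) :
    {w : ℂ | 0 < w.im ∧ w.im < Real.pi / (1 + a) ∧
        Real.exp ((1 - a) * w.re) * Real.sin ((1 - a) * w.im) <
          Real.exp ((1 + a) * w.re) * Real.sin ((1 + a) * w.im)} = Up a := by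
  ext w
  simp only [Set.mem_setOf_eq, Up, Fc_im]
  constructor
  · rintro ⟨h1, h2, h3⟩
    exact ⟨h1, h2, by linarith⟩
  · rintro ⟨h1, h2, h3⟩
    exact ⟨h1, h2, by linarith⟩

lemma Fc_conj_im (a : ℝ) (w : ℂ) : (Fc a ((starRingEnd ℂ) w)).im = -(Fc a w).im := by
  rw [Fc_conj]; simp

lemma low_mem_iff (a : ℝ) (w : ℂ) :
    (-(Real.pi / (1 + a)) < w.im ∧ w.im < 0 ∧
        Real.exp ((1 + a) * w.re) * Real.sin ((1 + a) * w.im) <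
          Real.exp ((1 - a) * w.re) * Real.sin ((1 - a) * w.im))
      ↔ (starRingEnd ℂ) w ∈ Up a := by
  have him := Fc_conj_im a w
  have hfim := Fc_im a w
  simp only [Up, Set.mem_setOf_eq, him, Complex.conj_im]
  constructor
  · rintro ⟨h1, h2, h3⟩
    exact ⟨by linarith, by linarith, by linarith⟩
  · rintro ⟨h1, h2, h3⟩
    exact ⟨by linarith, by linarith, by linarith⟩

theorem stmt_12 (a : ℝ) (ha0 : 0 < a) (ha1 : a < 1)
    (f : ℂ → ℂ) (hf : ∀ w : ℂ, f w = Complex.sinh (a * w) * Complex.exp w)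
    (ξa : ℝ) (hξa : ξa = (1 / (2 * a)) * Real.log ((1 - a) / (1 + a)))
    (xa : ℝ) (hxa : xa = -(a / (1 + a)) * ((1 - a) / (1 + a)) ^ ((1 - a) / (2 * a)))
    (Ω₀ : Set ℂ)
    (hΩ₀ : Ω₀ =
      {w : ℂ | 0 < w.im ∧ w.im < Real.pi / (1 + a) ∧
          Real.exp ((1 - a) * w.re) * Real.sin ((1 - a) * w.im) <
            Real.exp ((1 + a) * w.re) * Real.sin ((1 + a) * w.im)} ∪
        {w : ℂ | w.im = 0 ∧ ξa < w.re} ∪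
        {w : ℂ | -(Real.pi / (1 + a)) < w.im ∧ w.im < 0 ∧
          Real.exp ((1 + a) * w.re) * Real.sin ((1 + a) * w.im) <
            Real.exp ((1 - a) * w.re) * Real.sin ((1 - a) * w.im)}) :
    Set.BijOn f Ω₀ {z : ℂ | ¬ (z.im = 0 ∧ z.re ≤ xa)} := by
  have hfF : ∀ w : ℂ, f w = Fc a w := fun w => by rw [hf w, Fc_eq]
  have hUp := up_set_eq a
  have hG := G_at_ξa ha0 ha1 hξa hxa
  have hMono := G_strictMonoOn ha0 ha1 hξa
  -- sign helpers
  have low_sign : ∀ w : ℂ, (starRingEnd ℂ) w ∈ Up a → (Fc a w).im < 0 := by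
    intro w hw
    have := hw.2.2
    rw [Fc_conj_im] at this
    linarith
  refine ⟨?_, ?_, ?_⟩
  · -- MapsTo
    intro w hw
    rw [hΩ₀] at hw
    rcases hw with (hw | hw) | hw
    · rw [hUp] at hw
      simp only [Set.mem_setOf_eq]
      rintro ⟨h1, _⟩
      rw [hfF w] at h1
      exact absurd h1 (ne_of_gt hw.2.2)
    · obtain ⟨him, hre⟩ := hw
      have hwr : w = ((w.re : ℝ) : ℂ) := eq_ofReal_of_im_zero him
      simp only [Set.mem_setOf_eq]
      rintro ⟨_, h2⟩
      rw [hfF w, hwr, Fc_ofReal] at h2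
      simp only [Complex.ofReal_re] at h2
      have : xa < G a w.re := by
        calc xa = G a ξa := hG.symm
          _ < G a w.re := hMono Set.self_mem_Ici (Set.mem_Ici.mpr hre.le) hre
      linarith
    · have hlow := low_sign w ((low_mem_iff a w).mp hw)
      simp only [Set.mem_setOf_eq]
      rintro ⟨h1, _⟩
      rw [hfF w] at h1
      exact absurd h1 (ne_of_lt hlow)
  · -- InjOn
    intro w1 hw1 w2 hw2 heq
    rw [hΩ₀] at hw1 hw2
    rw [hfF w1, hfF w2] at heq
    rcases hw1 with (hw1 | hw1) | hw1 <;> rcases hw2 with (hw2 | hw2) | hw2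
    · rw [hUp] at hw1 hw2
      exact injOn_Fc_Up ha0 ha1 hw1 hw2 heq
    · rw [hUp] at hw1
      exfalso
      have h1 := hw1.2.2
      have h2 : (Fc a w2).im = 0 := by
        rw [eq_ofReal_of_im_zero hw2.1, Fc_ofReal]
        simp
      rw [heq] at h1
      linarith
    · rw [hUp] at hw1
      exfalso
      have h1 := hw1.2.2
      have h2 := low_sign w2 ((low_mem_iff a w2).mp hw2)
      rw [heq] at h1
      linarith
    · rw [hUp] at hw2
      exfalso
      have h1 := hw2.2.2
      have h2 : (Fc a w1).im = 0 := by
        rw [eq_ofReal_of_im_zero hw1.1, Fc_ofReal]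
        simp
      rw [← heq] at h1
      linarith
    · -- mid mid
      have e1 : w1 = ((w1.re : ℝ) : ℂ) := eq_ofReal_of_im_zero hw1.1
      have e2 : w2 = ((w2.re : ℝ) : ℂ) := eq_ofReal_of_im_zero hw2.1
      rw [e1, e2, Fc_ofReal, Fc_ofReal] at heq
      have hGG : G a w1.re = G a w2.re := Complex.ofReal_inj.mp heq
      have hre : w1.re = w2.re :=
        hMono.injOn (Set.mem_Ici.mpr hw1.2.le) (Set.mem_Ici.mpr hw2.2.le) hGG
      rw [e1, e2, hre]
    · exfalso
      have h1 := low_sign w2 ((low_mem_iff a w2).mp hw2)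
      have h2 : (Fc a w1).im = 0 := by
        rw [eq_ofReal_of_im_zero hw1.1, Fc_ofReal]
        simp
      rw [← heq] at h1
      linarith
    · rw [hUp] at hw2
      exfalso
      have h1 := hw2.2.2
      have h2 := low_sign w1 ((low_mem_iff a w1).mp hw1)
      rw [← heq] at h1
      linarith
    · exfalso
      have h1 := low_sign w1 ((low_mem_iff a w1).mp hw1)
      have h2 : (Fc a w2).im = 0 := by
        rw [eq_ofReal_of_im_zero hw2.1, Fc_ofReal]
        simp
      rw [heq] at h1
      linarith
    · -- low low
      have c1 := (low_mem_iff a w1).mp hw1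
      have c2 := (low_mem_iff a w2).mp hw2
      have heqc : Fc a ((starRingEnd ℂ) w1) = Fc a ((starRingEnd ℂ) w2) := by
        rw [Fc_conj, Fc_conj, heq]
      have h := injOn_Fc_Up ha0 ha1 c1 c2 heqc
      have := congrArg (starRingEnd ℂ) h
      simpa using this
  · -- SurjOn
    intro z hz
    simp only [Set.mem_setOf_eq] at hz
    push_neg at hz
    rcases lt_trichotomy z.im 0 with hzim | hzim | hzim
    · have hconj : 0 < ((starRingEnd ℂ) z).im := by
        rw [Complex.conj_im]; linarith
      have hmem : (starRingEnd ℂ) z ∈ Fc a '' Up a := by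
        rw [Fc_image_Up ha0 ha1]; exact hconj
      obtain ⟨w, hwUp, hFw⟩ := hmem
      refine ⟨(starRingEnd ℂ) w, ?_, ?_⟩
      · rw [hΩ₀]
        right
        apply (low_mem_iff a ((starRingEnd ℂ) w)).mpr
        simpa using hwUp
      · rw [hfF, Fc_conj, hFw]
        simp
    · have hxa' : xa < z.re := hz hzim
      obtain ⟨ξ, hξ, hGξ⟩ := G_surj ha0 ha1 hξa hxa hxa'
      refine ⟨((ξ : ℝ) : ℂ), ?_, ?_⟩
      · rw [hΩ₀]
        left; right
        exact ⟨by simp, by simpa using hξ⟩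
      · rw [hfF, Fc_ofReal, hGξ]
        exact (eq_ofReal_of_im_zero hzim).symm
    · have hmem : z ∈ Fc a '' Up a := by
        rw [Fc_image_Up ha0 ha1]; exact hzim
      obtain ⟨w, hwUp, hFw⟩ := hmem
      refine ⟨w, ?_, by rw [hfF]; exact hFw⟩
      rw [hΩ₀]
      left; left
      rw [hUp]
      exact hwUp
end

section
/- Define Ω₀ ⊂ ℂ as the union of: the set of ξ + iη with 0 < η < π/(1+a) and e^{(1+a)ξ}·sin((1+a)η) > e^{(1−a)ξ}·sin((1−a)η); the set of real ξ with ξ > ξ_a; and the set of ξ + iη with −π/(1+a) < η < 0 and e^{(1+a)ξ}·sin((1+a)η) < e^{(1−a)ξ}·sin((1−a)η). For each k ∈ ℤ set Ω_k = Ω₀ + i·kπ/a. Then f restricted to Ω_k is a bijection onto the rotated slit plane exp(i·kπ·(1+a)/a)·(ℂ ∖ (−∞, x_a]) = {exp(i·kπ·(1+a)/a)·z : z ∈ ℂ, z ∉ (−∞, x_a]}. -/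
open Complex Real Set
open Filter

lemma arg_pos_of_im_pos {z : ℂ} (hz : 0 < z.im) : 0 < z.arg :=
  lt_of_le_of_ne (Complex.arg_nonneg_iff.mpr hz.le)
    (fun h => by rw [eq_comm, Complex.arg_eq_zero_iff] at h; exact absurd h.2 hz.ne')

lemma im_log_mul_real {z : ℂ} (l : ℝ) : (Complex.log z * (l : ℂ)).im = l * z.arg := by
  simp [Complex.log_im, Complex.mul_im]; ring

lemma im_cpow_neg {l : ℝ} (hl0 : -1 < l) (hl1 : l < 0) {z : ℂ} (hz : 0 < z.im) :
    (z ^ (l : ℂ)).im < 0 := by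
  have hz0 : z ≠ 0 := fun h => by simp [h] at hz
  rw [Complex.cpow_def_of_ne_zero hz0, Complex.exp_im, im_log_mul_real]
  have h1 : 0 < z.arg := arg_pos_of_im_pos hz
  have h2 : z.arg ≤ Real.pi := Complex.arg_le_pi z
  have hs : Real.sin (l * z.arg) < 0 :=
    Real.sin_neg_of_neg_of_neg_pi_lt (by nlinarith) (by nlinarith [Real.pi_pos])
  have he : 0 < Real.exp (Complex.log z * (l:ℂ)).re := Real.exp_pos _
  nlinarith

lemma sub_cpow_injOn {l : ℝ} (hl0 : 0 < l) (hl1 : l < 1) :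
    Set.InjOn (fun z : ℂ => z - z ^ (l : ℂ)) {z : ℂ | 0 < z.im} := by
  intro z2 hz2 z1 hz1 heq
  simp only [Set.mem_setOf_eq] at hz2 hz1
  simp only at heq
  by_contra hne
  have hd : z1 - z2 ≠ 0 := sub_ne_zero.mpr (Ne.symm hne)
  set d : ℂ := z1 - z2 with hdd
  -- the segment
  set γ : ℝ → ℂ := fun t => z2 + (t : ℂ) * d with hγ
  have hγim : ∀ t ∈ Set.uIcc (0:ℝ) 1, 0 < (γ t).im := by
    intro t ht
    rw [Set.uIcc_of_le (by norm_num)] at ht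
    have : (γ t).im = (1 - t) * z2.im + t * z1.im := by
      simp [hγ, hdd, Complex.add_im, Complex.mul_im, Complex.sub_im]; ring
    rw [this]
    rcases ht with ⟨h0, h1⟩
    rcases eq_or_lt_of_le h0 with h|h
    · simp [← h]; exact hz2
    rcases eq_or_lt_of_le h1 with h'|h'
    · simp [h']; exact hz1
    · nlinarith [mul_pos (by linarith : (0:ℝ) < 1 - t) hz2, mul_pos h hz1]
  have hγmem : ∀ t ∈ Set.uIcc (0:ℝ) 1, γ t ∈ Complex.slitPlane := by
    intro t ht
    exact Complex.mem_slitPlane_iff.mpr (Or.inr (hγim t ht).ne')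
  -- derivative of ψ = g ∘ γ with g z = z ^ l
  have hψ : ∀ t ∈ Set.uIcc (0:ℝ) 1,
      HasDerivAt (fun t : ℝ => γ t ^ (l : ℂ))
        (d * ((l : ℂ) * γ t ^ ((l : ℂ) - 1))) t := by
    intro t ht
    have hg : HasDerivAt (fun z : ℂ => z ^ (l : ℂ)) ((l : ℂ) * γ t ^ ((l : ℂ) - 1)) (γ t) :=
      (Complex.hasStrictDerivAt_cpow_const (hγmem t ht)).hasDerivAt
    have hγ' : HasDerivAt γ d t := by
      have : HasDerivAt (fun t : ℝ => (t : ℂ)) 1 t := Complex.ofRealCLM.hasDerivAt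
      have h := (this.mul_const d).const_add z2; rw [one_mul] at h; exact h
    have := hg.scomp t hγ'
    exact this
  -- the integrand
  set F : ℝ → ℂ := fun t => (l : ℂ) * γ t ^ ((l : ℂ) - 1) with hF
  have hFcont : ContinuousOn F (Set.uIcc (0:ℝ) 1) := by
    intro t ht
    apply ContinuousWithinAt.mono _ (Set.subset_univ _)
    apply ContinuousAt.continuousWithinAt
    apply ContinuousAt.mul continuousAt_const
    exact (continuousAt_cpow_const (hγmem t ht)).comp
      (by fun_prop : ContinuousAt γ t)
  have hFint : IntervalIntegrable F MeasureTheory.volume 0 1 :=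
    hFcont.intervalIntegrable
  have hint : IntervalIntegrable (fun t => d * F t) MeasureTheory.volume 0 1 := by
    simpa [mul_comm] using hFint.const_mul d
  have hFTC := intervalIntegral.integral_eq_sub_of_hasDerivAt hψ hint
  -- ∫ d * F = g z1 - g z2 = d
  have hval : (∫ t in (0:ℝ)..1, d * F t) = d := by
    rw [hFTC]
    have h0 : γ 0 = z2 := by simp [hγ]
    have h1 : γ 1 = z1 := by simp [hγ, hdd]
    rw [h0, h1]
    linear_combination heq
  have hintF : d * (∫ t in (0:ℝ)..1, F t) = d := by
    rw [← intervalIntegral.integral_const_mul]; exact hval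
  have hone : (∫ t in (0:ℝ)..1, F t) = 1 :=
    mul_left_cancel₀ hd (by rw [hintF, mul_one])
  -- imaginary part
  have him : (∫ t in (0:ℝ)..1, F t).im = ∫ t in (0:ℝ)..1, (F t).im := by
    exact (Complex.imCLM.intervalIntegral_comp_comm hFint).symm
  have himneg : ∀ t ∈ Set.Ioo (0:ℝ) 1, (F t).im < 0 := by
    intro t ht
    have htm : t ∈ Set.uIcc (0:ℝ) 1 := by
      rw [Set.uIcc_of_le (by norm_num)]; exact ⟨ht.1.le, ht.2.le⟩
    have h1 := im_cpow_neg (by linarith : (-1:ℝ) < l - 1) (by linarith) (hγim t htm)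
    have : ((l:ℂ) - 1) = ((l - 1 : ℝ) : ℂ) := by push_cast; ring
    rw [hF]
    simp only [Complex.mul_im, Complex.ofReal_re, Complex.ofReal_im]
    rw [this]
    nlinarith [h1]
  have : (0:ℝ) < ∫ t in (0:ℝ)..1, -(F t).im := by
    apply intervalIntegral.intervalIntegral_pos_of_pos_on
    · exact ((Complex.continuous_im.comp_continuousOn hFcont).neg).intervalIntegrable
    · intro x hx; simpa using himneg x hx
    · norm_num
  rw [intervalIntegral.integral_neg, ← him, hone] at this
  simp at this

lemma im_cpow_pos {l : ℝ} (hl0 : 0 < l) (hl1 : l ≤ 1) {z : ℂ} (hz : 0 < z.im) :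
    0 < (z ^ (l : ℂ)).im := by
  have hz0 : z ≠ 0 := fun h => by simp [h] at hz
  rw [Complex.cpow_def_of_ne_zero hz0, Complex.exp_im, im_log_mul_real]
  have h1 : 0 < z.arg := arg_pos_of_im_pos hz
  have h2 : z.arg < Real.pi := lt_of_le_of_ne (Complex.arg_le_pi z)
    (fun h => by rw [Complex.arg_eq_pi_iff] at h; exact absurd h.2 hz.ne')
  have hlt : l * z.arg < Real.pi := by nlinarith [Real.pi_pos]
  have : 0 < Real.sin (l * z.arg) :=
    Real.sin_pos_of_pos_of_lt_pi (by positivity) hlt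
  positivity


lemma sub_cpow_surj {l : ℝ} (hl0 : 0 < l) (hl1 : l < 1) {z : ℂ} (hz : 0 < z.im) :
    ∃ ζ : ℂ, 0 < ζ.im ∧ ζ - ζ ^ (l : ℂ) = z := by
  set H : Set ℂ := {w : ℂ | 0 < w.im} with hH
  set h : ℂ → ℂ := fun ζ => ζ - ζ ^ (l : ℂ) with hh
  suffices hsuf : z ∈ h '' H by
    obtain ⟨ζ, hζ, hζe⟩ := hsuf; exact ⟨ζ, hζ, hζe⟩
  have hHopen : IsOpen H := isOpen_lt continuous_const Complex.continuous_im
  have hHconv : Convex ℝ H := convex_halfSpace_im_gt 0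
  have hslit : ∀ ζ ∈ H, ζ ∈ Complex.slitPlane := fun ζ hζ =>
    Complex.mem_slitPlane_iff.mpr (Or.inr (ne_of_gt hζ))
  have hdiff : ∀ ζ ∈ H, DifferentiableAt ℂ h ζ := by
    intro ζ hζ
    exact differentiableAt_id.sub
      (Complex.hasStrictDerivAt_cpow_const (hslit ζ hζ)).hasDerivAt.differentiableAt
  have hdiffOn : DifferentiableOn ℂ h H := fun ζ hζ => (hdiff ζ hζ).differentiableWithinAt
  have hV : IsOpen (h '' H) := by
    rcases (hdiffOn.analyticOnNhd hHopen).is_constant_or_isOpen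
        hHconv.isPreconnected with ⟨w, hw⟩ | hop
    · exfalso
      have h1 : (Complex.I : ℂ) ∈ H := by simp [hH]
      have h2 : (2 * Complex.I : ℂ) ∈ H := by simp [hH]
      have := sub_cpow_injOn hl0 hl1 h1 h2 (show h Complex.I = h (2*Complex.I) by rw [hw _ h1, hw _ h2])
      rw [Complex.ext_iff] at this
      simp at this
    · exact hop H (subset_refl _) hHopen
  -- closure claim
  have himle : ∀ ζ ∈ H, (h ζ).im ≤ ζ.im := by
    intro ζ hζ
    have := im_cpow_pos hl0 hl1.le (show 0 < ζ.im from hζ)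
    simp only [hh, Complex.sub_im]
    linarith
  have hclaim : ∀ y ∈ H, y ∈ closure (h '' H) → y ∈ h '' H := by
    intro y hy hyc
    obtain ⟨u, hu, hulim⟩ := mem_closure_iff_seq_limit.mp hyc
    choose ζ hζH hζeq using hu
    obtain ⟨N, hN⟩ := Metric.tendsto_atTop.mp hulim 1 (by norm_num)
    set M : ℝ := ‖y‖ + 1 with hM
    have hM0 : 0 ≤ M := by positivity
    set B : ℝ := max 1 ((M + 1) ^ (1 / (1 - l)) : ℝ) with hB
    have hbound : ∀ n, ‖ζ (n + N)‖ ≤ B := by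
      intro n
      by_contra hr
      push_neg at hr
      set r : ℝ := ‖ζ (n + N)‖ with hrr
      have hr1 : 1 < r := lt_of_le_of_lt (le_max_left _ _) hr
      have hr0 : 0 < r := by linarith
      have hup : ‖u (n + N)‖ ≤ M := by
        have := hN (n + N) (Nat.le_add_left _ _)
        rw [Complex.dist_eq] at this
        calc ‖u (n + N)‖ = ‖u (n + N) - y + y‖ := by ring_nf
          _ ≤ ‖u (n + N) - y‖ + ‖y‖ := norm_add_le _ _
          _ ≤ M := by rw [hM]; linarith
      have habs : r - r ^ l ≤ M := by
        have h1 : ‖ζ (n + N) ^ (l:ℂ)‖ = r ^ l := by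
          rw [hrr]; exact Complex.norm_cpow_real _ l
        have h2 : r - r ^ l ≤ ‖h (ζ (n + N))‖ := by
          have := norm_sub_norm_le (ζ (n + N)) (ζ (n + N) ^ (l:ℂ))
          rw [h1] at this; exact this
        rw [hζeq] at h2
        linarith
      -- but r > B forces r - r^l > M
      have hrB : (M + 1) ^ (1 / (1 - l)) < r := lt_of_le_of_lt (le_max_right _ _) hr
      have h1l : 0 < 1 - l := by linarith
      have hMB : M + 1 < r ^ (1 - l) := by
        have hbase : (0:ℝ) ≤ (M + 1) ^ (1 / (1 - l)) := Real.rpow_nonneg (by linarith) _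
        have := Real.rpow_lt_rpow hbase hrB h1l
        rwa [← Real.rpow_mul (by linarith : (0:ℝ) ≤ M + 1), one_div,
          inv_mul_cancel₀ h1l.ne', Real.rpow_one] at this
      have hrl1 : 1 ≤ r ^ l := Real.one_le_rpow hr1.le hl0.le
      have hsplit : r - r ^ l = r ^ l * (r ^ (1 - l) - 1) := by
        rw [mul_sub, mul_one, ← Real.rpow_add hr0]
        norm_num
      have : M < r - r ^ l := by
        rw [hsplit]
        nlinarith
      linarith
    -- compact
    set v : ℕ → ℂ := fun n => ζ (n + N) with hv
    obtain ⟨ζ0, hζ0mem, φ, hφmono, hφtend⟩ :=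
      (isCompact_closedBall (0:ℂ) B).tendsto_subseq
        (x := v) (fun n => by simpa [Complex.dist_eq] using hbound n)
    have hhtend : Tendsto (fun n => h (v (φ n))) atTop (nhds y) := by
      have : (fun n => h (v (φ n))) = (fun n => u (φ n + N)) := by
        funext n; exact hζeq _
      rw [this]
      exact hulim.comp ((tendsto_add_atTop_nat N).comp hφmono.tendsto_atTop)
    have him0 : 0 ≤ ζ0.im := by
      apply ge_of_tendsto ((Complex.continuous_im.tendsto ζ0).comp hφtend)
      filter_upwards with n
      exact (hζH _ : 0 < (v (φ n)).im).le
    rcases eq_or_lt_of_le him0 with heq0 | hpos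
    · exfalso
      have hle : ∀ n, (h (v (φ n))).im ≤ (v (φ n)).im := fun n => himle _ (hζH _)
      have h1 : Tendsto (fun n => (h (v (φ n))).im) atTop (nhds y.im) :=
        (Complex.continuous_im.tendsto y).comp hhtend
      have h2 : Tendsto (fun n => (v (φ n)).im) atTop (nhds ζ0.im) :=
        (Complex.continuous_im.tendsto ζ0).comp hφtend
      have : y.im ≤ ζ0.im := le_of_tendsto_of_tendsto' h1 h2 hle
      rw [← heq0] at this
      exact absurd hy (by simp [hH]; linarith)
    · have hcont : ContinuousAt h ζ0 := (hdiff ζ0 hpos).continuousAt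
      have : h ζ0 = y := tendsto_nhds_unique (hcont.tendsto.comp hφtend) hhtend
      exact ⟨ζ0, hpos, this⟩
  -- clopen argument
  by_contra hnot
  have hne1 : (H ∩ h '' H).Nonempty := by
    refine ⟨h (2 * Complex.I), ?_, ⟨2 * Complex.I, by simp [hH], rfl⟩⟩
    have him : (h (2 * Complex.I)).im = 2 - ((2 * Complex.I) ^ (l:ℂ)).im := by
      simp [hh, Complex.sub_im]
    have habs : ‖(2 * Complex.I) ^ (l:ℂ)‖ = 2 ^ l := by
      rw [Complex.norm_cpow_real]
      norm_num
    have h2l : (2:ℝ) ^ l < 2 := by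
      have := Real.rpow_lt_rpow_of_exponent_lt (by norm_num : (1:ℝ) < 2) hl1
      rwa [Real.rpow_one] at this
    have hle2 : ((2 * Complex.I) ^ (l:ℂ)).im ≤ 2 ^ l := by
      rw [← habs]
      exact le_trans (le_abs_self _) (Complex.abs_im_le_norm _)
    show 0 < (h (2*Complex.I)).im
    rw [him]; linarith
  have hne2 : (H ∩ (closure (h '' H))ᶜ).Nonempty :=
    ⟨z, hz, fun hc => hnot (hclaim z hz hc)⟩
  obtain ⟨w, _, hw1, hw2⟩ := hHconv.isPreconnected (h '' H) (closure (h '' H))ᶜ hV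
    isClosed_closure.isOpen_compl
    (fun y hy => by
      by_cases hyc : y ∈ closure (h '' H)
      · exact Or.inl (hclaim y hy hyc)
      · exact Or.inr hyc)
    hne1 hne2
  exact hw2 (subset_closure hw1)

lemma gderiv (a : ℝ) (x : ℝ) :
    HasDerivAt (fun x => Real.sinh (a*x) * Real.exp x)
      ((a * Real.cosh (a*x) + Real.sinh (a*x)) * Real.exp x) x := by
  have h1 : HasDerivAt (fun x : ℝ => Real.sinh (a*x)) (a * Real.cosh (a*x)) x := by
    have := (Real.hasDerivAt_sinh (a*x)).comp x ((hasDerivAt_id x).const_mul a)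
    simpa [mul_comm, Function.comp_def] using this
  have := h1.mul (Real.hasDerivAt_exp x)
  refine this.congr_deriv ?_
  ring

lemma sinh_tendsto_atTop : Filter.Tendsto Real.sinh atTop atTop := by
  have h2 : Filter.Tendsto (fun x => (Real.exp x + -1)/2) atTop atTop :=
    (tendsto_atTop_add_const_right atTop (-1) Real.tendsto_exp_atTop).atTop_div_const
      (by norm_num)
  apply tendsto_atTop_mono' atTop _ h2
  filter_upwards [eventually_ge_atTop (0:ℝ)] with x hx
  rw [Real.sinh_eq]
  have h1 : Real.exp (-x) ≤ 1 := Real.exp_le_one_iff.mpr (by linarith)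
  have h0 : 0 < Real.exp (-x) := Real.exp_pos _
  linarith

lemma realBij (a : ℝ) (ha0 : 0 < a) (ha1 : a < 1)
    (ξa : ℝ) (hξa : ξa = (1 / (2 * a)) * Real.log ((1 - a) / (1 + a)))
    (xa : ℝ) (hxa : xa = -(a / (1 + a)) * ((1 - a) / (1 + a)) ^ ((1 - a) / (2 * a))) :
    Set.BijOn (fun w : ℂ => Complex.sinh (a * w) * Complex.exp w)
      {w : ℂ | w.im = 0 ∧ ξa < w.re} {z : ℂ | z.im = 0 ∧ xa < z.re} := by
  set c : ℝ := (1 - a) / (1 + a) with hc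
  have hc0 : (0:ℝ) < c := div_pos (by linarith) (by linarith)
  set g : ℝ → ℝ := fun x => Real.sinh (a*x) * Real.exp x with hg
  have hlog : Real.log c = 2 * a * ξa := by rw [hξa]; field_simp
  -- derivative positive on Ioi ξa
  have hderivpos : ∀ x ∈ Set.Ioi ξa, 0 < (a * Real.cosh (a*x) + Real.sinh (a*x)) * Real.exp x := by
    intro x hx
    have hE : (0:ℝ) < Real.exp (a*x) := Real.exp_pos _
    have hEE : Real.exp (a*x) * Real.exp (-(a*x)) = 1 := by
      rw [← Real.exp_add]; simp
    have hca : c * (1 + a) = 1 - a := by rw [hc]; field_simp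
    have hgt : c < Real.exp (a*x) ^ 2 := by
      have h2 : Real.exp (2*a*x) = Real.exp (a*x) ^ 2 := by
        rw [show 2*a*x = a*x + a*x by ring, Real.exp_add, sq]
      rw [← h2]
      calc c = Real.exp (Real.log c) := (Real.exp_log hc0).symm
        _ < Real.exp (2*a*x) := by
            apply Real.exp_lt_exp.mpr
            rw [hlog]
            have := Set.mem_Ioi.mp hx
            nlinarith
    rw [Real.cosh_eq, Real.sinh_eq]
    have h3 : 0 < (1+a) * Real.exp (a*x) - (1-a) * Real.exp (-(a*x)) := by
      nlinarith [hgt, hEE, Real.exp_pos (-(a*x)), hca, hE]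
    nlinarith [Real.exp_pos x]
  have hmono : StrictMonoOn g (Set.Ici ξa) := by
    apply strictMonoOn_of_deriv_pos (convex_Ici ξa)
    · fun_prop
    · intro x hx
      rw [interior_Ici] at hx
      rw [(gderiv a x).deriv]
      exact hderivpos x hx
  -- value at ξa
  have hrpow : ∀ t : ℝ, Real.exp (Real.log c * t) = c ^ t := by
    intro t
    rw [Real.rpow_def_of_pos hc0]
  have hgξa : g ξa = xa := by
    have hEa : Real.exp (a * ξa) = c ^ ((1:ℝ)/2) := by
      rw [show a * ξa = Real.log c * ((1:ℝ)/2) by rw [hlog]; ring, hrpow]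
    have hEna : Real.exp (-(a * ξa)) = c ^ (-(1:ℝ)/2) := by
      rw [show -(a * ξa) = Real.log c * (-(1:ℝ)/2) by rw [hlog]; ring, hrpow]
    have hEξ : Real.exp ξa = c ^ (1/(2*a)) := by
      rw [show ξa = Real.log c * (1/(2*a)) by rw [hlog]; field_simp, hrpow]
    rw [hg]
    simp only [Real.sinh_eq, hEa, hEna, hEξ]
    rw [hxa]
    rw [div_mul_eq_mul_div, sub_mul, ← Real.rpow_add hc0, ← Real.rpow_add hc0]
    have e1 : (1:ℝ)/2 + 1/(2*a) = 1 + (1-a)/(2*a) := by field_simp; ring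
    have e2 : -(1:ℝ)/2 + 1/(2*a) = (1-a)/(2*a) := by field_simp; ring
    rw [e1, e2, Real.rpow_add hc0, Real.rpow_one]
    have h5 : -(a / (1 + a)) = (c - 1)/2 := by rw [hc]; field_simp; ring
    rw [h5]
    ring
  -- tendsto atTop
  have htop : Tendsto g atTop atTop := by
    apply Filter.Tendsto.atTop_mul_atTop₀
    · exact sinh_tendsto_atTop.comp (tendsto_id.const_mul_atTop ha0)
    · exact Real.tendsto_exp_atTop
  -- the complex-real bridge
  have hfr : ∀ x : ℝ, Complex.sinh ((a:ℂ) * (x:ℂ)) * Complex.exp (x:ℂ) = ((g x : ℝ) : ℂ) := by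
    intro x
    rw [hg]
    push_cast
    ring
  constructor
  · -- MapsTo
    rintro w ⟨him, hre⟩
    have hw : w = ((w.re : ℝ) : ℂ) := Complex.ext rfl (by simp [him])
    rw [Set.mem_setOf_eq, hw]
    simp only [hfr]
    constructor
    · simp
    · simp only [Complex.ofReal_re]
      rw [← hgξa]
      exact hmono (Set.self_mem_Ici) (Set.mem_Ici.mpr hre.le) hre
  constructor
  · -- InjOn
    rintro w1 ⟨him1, hre1⟩ w2 ⟨him2, hre2⟩ heq
    have hw1 : w1 = ((w1.re : ℝ) : ℂ) := Complex.ext rfl (by simp [him1])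
    have hw2 : w2 = ((w2.re : ℝ) : ℂ) := Complex.ext rfl (by simp [him2])
    rw [hw1, hw2] at heq
    simp only [hfr] at heq
    have : g w1.re = g w2.re := by exact_mod_cast heq
    have := hmono.injOn (Set.mem_Ici.mpr hre1.le) (Set.mem_Ici.mpr hre2.le) this
    rw [hw1, hw2, this]
  · -- SurjOn
    rintro z ⟨him, hre⟩
    obtain ⟨M, hM1, hM2⟩ := ((htop.eventually_gt_atTop z.re).and (eventually_gt_atTop ξa)).exists
    have hz : z.re ∈ Set.Ioo (g ξa) (g M) := ⟨by rw [hgξa]; exact hre, hM1⟩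
    obtain ⟨x, hx, hgx⟩ := intermediate_value_Ioo hM2.le (by fun_prop : ContinuousOn g (Set.Icc ξa M)) hz
    refine ⟨(x : ℂ), ⟨by simp, by simpa using hx.1⟩, ?_⟩
    simp only [hfr, hgx]
    exact Complex.ext (by simp) (by simp [him])

lemma f_eq (a : ℝ) (w : ℂ) : Complex.sinh ((a:ℂ)*w) * Complex.exp w
    = (Complex.exp (((1+a:ℝ):ℂ) * w) - Complex.exp (((1-a:ℝ):ℂ) * w)) / 2 := by
  have hs : Complex.sinh ((a:ℂ)*w) = (Complex.exp ((a:ℂ)*w) - Complex.exp (-((a:ℂ)*w))) / 2 := rfl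
  rw [hs]
  have h1 : ((1+a:ℝ):ℂ) * w = (a:ℂ)*w + w := by push_cast; ring
  have h2 : ((1-a:ℝ):ℂ) * w = -((a:ℂ)*w) + w := by push_cast; ring
  rw [h1, h2, Complex.exp_add, Complex.exp_add]
  ring

lemma f_im (a : ℝ) (w : ℂ) : (Complex.sinh ((a:ℂ)*w) * Complex.exp w).im
    = (Real.exp ((1+a) * w.re) * Real.sin ((1+a) * w.im)
      - Real.exp ((1-a) * w.re) * Real.sin ((1-a) * w.im)) / 2 := by
  rw [f_eq]
  have hre1 : ((((1+a:ℝ):ℂ)) * w).re = (1+a) * w.re := by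
    simp [Complex.mul_re]
  have him1 : ((((1+a:ℝ):ℂ)) * w).im = (1+a) * w.im := by
    simp [Complex.mul_im]
  have hre2 : ((((1-a:ℝ):ℂ)) * w).re = (1-a) * w.re := by
    simp [Complex.mul_re]
  have him2 : ((((1-a:ℝ):ℂ)) * w).im = (1-a) * w.im := by
    simp [Complex.mul_im]
  rw [show ((Complex.exp (((1+a:ℝ):ℂ) * w) - Complex.exp (((1-a:ℝ):ℂ) * w)) / 2).im
      = ((Complex.exp (((1+a:ℝ):ℂ) * w)).im - (Complex.exp (((1-a:ℝ):ℂ) * w)).im)/2 by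
    simp [Complex.div_im, Complex.sub_im]]
  rw [Complex.exp_im, Complex.exp_im, hre1, him1, hre2, him2]

lemma upperBij (a : ℝ) (ha0 : 0 < a) (ha1 : a < 1) :
    Set.BijOn (fun w : ℂ => Complex.sinh ((a:ℂ) * w) * Complex.exp w)
      {w : ℂ | 0 < w.im ∧ w.im < Real.pi / (1 + a) ∧
          Real.exp ((1 - a) * w.re) * Real.sin ((1 - a) * w.im) <
            Real.exp ((1 + a) * w.re) * Real.sin ((1 + a) * w.im)}
      {z : ℂ | 0 < z.im} := by
  have ha1' : (0:ℝ) < 1 + a := by linarith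
  set l : ℝ := (1-a)/(1+a) with hl
  have hl0 : 0 < l := div_pos (by linarith) ha1'
  have hl1 : l < 1 := (div_lt_one ha1').mpr (by linarith)
  set p : ℂ := ((1+a:ℝ):ℂ) with hp
  have hp0 : p ≠ 0 := by
    rw [hp]; exact_mod_cast (ne_of_gt ha1')
  set F : ℂ → ℂ := fun w : ℂ => Complex.sinh ((a:ℂ) * w) * Complex.exp w with hF
  -- strip facts
  have hpim : ∀ w : ℂ, (p * w).im = (1+a) * w.im := by
    intro w; simp [hp, Complex.mul_im]
  have hpre : ∀ w : ℂ, (p * w).re = (1+a) * w.re := by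
    intro w; simp [hp, Complex.mul_re]
  have hstrip : ∀ w : ℂ, 0 < w.im → w.im < Real.pi / (1+a) →
      0 < (p*w).im ∧ (p*w).im < Real.pi := by
    intro w h1 h2
    rw [hpim]
    exact ⟨by positivity, (lt_div_iff₀' ha1').mp h2⟩
  -- cpow identity
  have hcpow : ∀ w : ℂ, 0 < w.im → w.im < Real.pi / (1+a) →
      (Complex.exp (p * w)) ^ ((l:ℝ):ℂ) = Complex.exp (((1-a:ℝ):ℂ) * w) := by
    intro w h1 h2
    obtain ⟨hs1, hs2⟩ := hstrip w h1 h2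
    rw [Complex.cpow_def_of_ne_zero (Complex.exp_ne_zero _),
      Complex.log_exp (by linarith [Real.pi_pos]) hs2.le]
    congr 1
    rw [hp]
    have : ((l:ℝ):ℂ) = ((1-a:ℝ):ℂ) / ((1+a:ℝ):ℂ) := by
      rw [hl]; push_cast; ring
    rw [this]
    have h1a : (1 + (a:ℂ)) ≠ 0 := by
      intro h
      have : ((1+a:ℝ):ℂ) = 0 := by push_cast; exact h
      exact (by exact_mod_cast (ne_of_gt ha1') : ((1+a:ℝ):ℂ) ≠ 0) this
    push_cast
    field_simp
  -- F on the strip equals phi of exp(p w)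
  have hFval : ∀ w : ℂ, 0 < w.im → w.im < Real.pi / (1+a) →
      F w = (Complex.exp (p*w) - (Complex.exp (p*w)) ^ ((l:ℝ):ℂ)) / 2 := by
    intro w h1 h2
    rw [hF]; simp only
    rw [f_eq a w, hcpow w h1 h2, hp]
  have hexpH : ∀ w : ℂ, 0 < w.im → w.im < Real.pi / (1+a) →
      Complex.exp (p*w) ∈ {z : ℂ | 0 < z.im} := by
    intro w h1 h2
    obtain ⟨hs1, hs2⟩ := hstrip w h1 h2
    have hsin := Real.sin_pos_of_pos_of_lt_pi hs1 hs2
    have hexp := Real.exp_pos (p*w).re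
    rw [Set.mem_setOf_eq, Complex.exp_im]
    positivity
  have hA : ∀ w : ℂ, (Real.exp ((1 - a) * w.re) * Real.sin ((1 - a) * w.im) <
        Real.exp ((1 + a) * w.re) * Real.sin ((1 + a) * w.im)) ↔ 0 < (F w).im := by
    intro w
    rw [hF]; simp only
    rw [f_im a w]
    constructor <;> intro h <;> linarith
  refine ⟨?_, ?_, ?_⟩
  · rintro w ⟨h1, h2, h3⟩
    exact (hA w).mp h3
  · rintro w1 ⟨h11, h12, h13⟩ w2 ⟨h21, h22, h23⟩ heq
    have heq' : Complex.exp (p*w1) - Complex.exp (p*w1) ^ ((l:ℝ):ℂ)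
        = Complex.exp (p*w2) - Complex.exp (p*w2) ^ ((l:ℝ):ℂ) := by
      have hFF : F w1 = F w2 := heq
      rw [hFval w1 h11 h12, hFval w2 h21 h22] at hFF
      field_simp at hFF
      exact hFF
    have hζ : Complex.exp (p*w1) = Complex.exp (p*w2) :=
      sub_cpow_injOn hl0 hl1 (hexpH w1 h11 h12) (hexpH w2 h21 h22) heq'
    obtain ⟨n, hn⟩ := Complex.exp_eq_exp_iff_exists_int.mp hζ
    have hnim : (1+a)*w1.im = (1+a)*w2.im + (n:ℝ) * (2*Real.pi) := by
      have := congrArg Complex.im hn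
      rw [Complex.add_im, hpim, hpim] at this
      have him2 : (((n:ℂ))*(2*(Real.pi:ℂ)*Complex.I)).im = (n:ℝ)*(2*Real.pi) := by
        simp [Complex.mul_im, Complex.mul_re]
      rw [this, him2]
    have hb11 : 0 < (1+a)*w1.im := by positivity
    have hb12 : (1+a)*w1.im < Real.pi := (lt_div_iff₀' ha1').mp h12
    have hb21 : 0 < (1+a)*w2.im := by positivity
    have hb22 : (1+a)*w2.im < Real.pi := (lt_div_iff₀' ha1').mp h22
    have hn0 : n = 0 := by
      rcases lt_trichotomy n 0 with h | h | h
      · exfalso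
        have hle : (n:ℝ) ≤ -1 := by exact_mod_cast (by omega : n ≤ -1)
        nlinarith [Real.pi_pos]
      · exact h
      · exfalso
        have hle : (1:ℝ) ≤ (n:ℝ) := by exact_mod_cast h
        nlinarith [Real.pi_pos]
    rw [hn0] at hn
    simp only [Int.cast_zero, zero_mul, add_zero] at hn
    exact mul_left_cancel₀ hp0 hn
  · intro z hz
    have hz' : 0 < z.im := hz
    have h2z : 0 < ((2:ℂ)*z).im := by
      have : ((2:ℂ)*z).im = 2*z.im := by simp [Complex.mul_im]
      rw [this]; linarith
    obtain ⟨ζ, hζim, hζeq⟩ := sub_cpow_surj hl0 hl1 h2z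
    have hζ0 : ζ ≠ 0 := fun h => by simp [h] at hζim
    set w : ℂ := Complex.log ζ / p with hw
    have hexpw : Complex.exp (p * w) = ζ := by
      rw [hw, mul_comm, div_mul_cancel₀ _ hp0, Complex.exp_log hζ0]
    have hwim : w.im = ζ.arg / (1+a) := by
      rw [hw, hp, Complex.div_ofReal_im, Complex.log_im]
    have harg1 : 0 < ζ.arg :=
      lt_of_le_of_ne (Complex.arg_nonneg_iff.mpr hζim.le)
        (fun h => by rw [eq_comm, Complex.arg_eq_zero_iff] at h; exact absurd h.2 hζim.ne')
    have harg2 : ζ.arg < Real.pi := lt_of_le_of_ne (Complex.arg_le_pi ζ)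
      (fun h => by rw [Complex.arg_eq_pi_iff] at h; exact absurd h.2 hζim.ne')
    have hwim1 : 0 < w.im := by rw [hwim]; positivity
    have hwim2 : w.im < Real.pi / (1+a) := by
      rw [hwim]
      exact (div_lt_div_iff_of_pos_right ha1').mpr harg2
    have hval : F w = z := by
      rw [hFval w hwim1 hwim2, hexpw, hζeq]
      ring
    refine ⟨w, ⟨hwim1, hwim2, (hA w).mpr ?_⟩, hval⟩
    rw [hval]
    exact hz'

lemma conjF (a : ℝ) (w : ℂ) :
    Complex.sinh ((a:ℂ) * (starRingEnd ℂ w)) * Complex.exp (starRingEnd ℂ w)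
      = starRingEnd ℂ (Complex.sinh ((a:ℂ) * w) * Complex.exp w) := by
  rw [map_mul, ← Complex.sinh_conj, ← Complex.exp_conj, map_mul, Complex.conj_ofReal]

lemma lowerBij (a : ℝ) (ha0 : 0 < a) (ha1 : a < 1) :
    Set.BijOn (fun w : ℂ => Complex.sinh ((a:ℂ) * w) * Complex.exp w)
      {w : ℂ | -(Real.pi / (1 + a)) < w.im ∧ w.im < 0 ∧
          Real.exp ((1 + a) * w.re) * Real.sin ((1 + a) * w.im) <
            Real.exp ((1 - a) * w.re) * Real.sin ((1 - a) * w.im)}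
      {z : ℂ | z.im < 0} := by
  have hU := upperBij a ha0 ha1
  set F : ℂ → ℂ := fun w : ℂ => Complex.sinh ((a:ℂ) * w) * Complex.exp w with hF
  have hmem : ∀ w : ℂ, (w ∈ {w : ℂ | -(Real.pi / (1 + a)) < w.im ∧ w.im < 0 ∧
      Real.exp ((1 + a) * w.re) * Real.sin ((1 + a) * w.im) <
        Real.exp ((1 - a) * w.re) * Real.sin ((1 - a) * w.im)}) ↔
      (starRingEnd ℂ w) ∈ {w : ℂ | 0 < w.im ∧ w.im < Real.pi / (1 + a) ∧
          Real.exp ((1 - a) * w.re) * Real.sin ((1 - a) * w.im) <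
            Real.exp ((1 + a) * w.re) * Real.sin ((1 + a) * w.im)} := by
    intro w
    simp only [Set.mem_setOf_eq, Complex.conj_re, Complex.conj_im, mul_neg, Real.sin_neg,
      mul_neg, neg_lt_neg_iff]
    constructor
    · rintro ⟨h1, h2, h3⟩
      exact ⟨by linarith, by linarith, by linarith⟩
    · rintro ⟨h1, h2, h3⟩
      exact ⟨by linarith, by linarith, by linarith⟩
  refine ⟨?_, ?_, ?_⟩
  · intro w hw
    have h1 := hU.mapsTo ((hmem w).mp hw)
    rw [Set.mem_setOf_eq] at h1 ⊢
    have h2 : (F (starRingEnd ℂ w)).im = -(F w).im := by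
      show (Complex.sinh ((a:ℂ) * (starRingEnd ℂ w)) * Complex.exp (starRingEnd ℂ w)).im = _
      rw [conjF a w, Complex.conj_im]
    rw [h2] at h1
    linarith
  · intro w1 hw1 w2 hw2 heq
    have h1 : F (starRingEnd ℂ w1) = F (starRingEnd ℂ w2) := by
      show Complex.sinh ((a:ℂ) * (starRingEnd ℂ w1)) * Complex.exp (starRingEnd ℂ w1)
        = Complex.sinh ((a:ℂ) * (starRingEnd ℂ w2)) * Complex.exp (starRingEnd ℂ w2)
      rw [conjF a w1, conjF a w2]
      exact congrArg _ heq
    have := hU.injOn ((hmem w1).mp hw1) ((hmem w2).mp hw2) h1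
    have := congrArg (starRingEnd ℂ) this
    simpa using this
  · intro z hz
    rw [Set.mem_setOf_eq] at hz
    have hcz : (starRingEnd ℂ z) ∈ {z : ℂ | 0 < z.im} := by
      rw [Set.mem_setOf_eq, Complex.conj_im]; linarith
    obtain ⟨w', hw', hval⟩ := hU.surjOn hcz
    refine ⟨starRingEnd ℂ w', ?_, ?_⟩
    · rw [hmem]; simpa using hw'
    · show Complex.sinh ((a:ℂ) * (starRingEnd ℂ w')) * Complex.exp (starRingEnd ℂ w') = z
      rw [conjF a w']
      have h3 : starRingEnd ℂ (F w') = starRingEnd ℂ (starRingEnd ℂ z) := congrArg _ hval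
      rw [Complex.conj_conj] at h3
      exact h3

lemma mainBij (a : ℝ) (ha0 : 0 < a) (ha1 : a < 1)
    (ξa : ℝ) (hξa : ξa = (1 / (2 * a)) * Real.log ((1 - a) / (1 + a)))
    (xa : ℝ) (hxa : xa = -(a / (1 + a)) * ((1 - a) / (1 + a)) ^ ((1 - a) / (2 * a))) :
    Set.BijOn (fun w : ℂ => Complex.sinh ((a:ℂ) * w) * Complex.exp w)
      ({w : ℂ | 0 < w.im ∧ w.im < Real.pi / (1 + a) ∧
          Real.exp ((1 - a) * w.re) * Real.sin ((1 - a) * w.im) <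
            Real.exp ((1 + a) * w.re) * Real.sin ((1 + a) * w.im)} ∪
        {w : ℂ | w.im = 0 ∧ ξa < w.re} ∪
        {w : ℂ | -(Real.pi / (1 + a)) < w.im ∧ w.im < 0 ∧
          Real.exp ((1 + a) * w.re) * Real.sin ((1 + a) * w.im) <
            Real.exp ((1 - a) * w.re) * Real.sin ((1 - a) * w.im)})
      {z : ℂ | ¬ (z.im = 0 ∧ z.re ≤ xa)} := by
  have hU := upperBij a ha0 ha1
  have hB := realBij a ha0 ha1 ξa hξa xa hxa
  have hC := lowerBij a ha0 ha1
  have hS : {z : ℂ | ¬ (z.im = 0 ∧ z.re ≤ xa)} =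
      ({z : ℂ | 0 < z.im} ∪ {z : ℂ | z.im = 0 ∧ xa < z.re}) ∪ {z : ℂ | z.im < 0} := by
    ext z
    simp only [Set.mem_setOf_eq, Set.mem_union]
    constructor
    · intro h
      rcases lt_trichotomy z.im 0 with h1 | h1 | h1
      · right; exact h1
      · left; right; exact ⟨h1, not_le.mp (fun hle => h ⟨h1, hle⟩)⟩
      · left; left; exact h1
    · rintro ((h | ⟨h1, h2⟩) | h) ⟨him, hre⟩
      · rw [him] at h; exact lt_irrefl 0 h
      · linarith
      · rw [him] at h; exact lt_irrefl 0 h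
  have sgnU := hU.mapsTo
  have sgnB := hB.mapsTo
  have sgnC := hC.mapsTo
  have hinj : Set.InjOn (fun w : ℂ => Complex.sinh ((a:ℂ) * w) * Complex.exp w)
      ({w : ℂ | 0 < w.im ∧ w.im < Real.pi / (1 + a) ∧
          Real.exp ((1 - a) * w.re) * Real.sin ((1 - a) * w.im) <
            Real.exp ((1 + a) * w.re) * Real.sin ((1 + a) * w.im)} ∪
        {w : ℂ | w.im = 0 ∧ ξa < w.re} ∪
        {w : ℂ | -(Real.pi / (1 + a)) < w.im ∧ w.im < 0 ∧
          Real.exp ((1 + a) * w.re) * Real.sin ((1 + a) * w.im) <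
            Real.exp ((1 - a) * w.re) * Real.sin ((1 - a) * w.im)}) := by
    rintro x ((hx | hx) | hx) y ((hy | hy) | hy) heq
    · exact hU.injOn hx hy heq
    · exfalso
      have s1 : (0:ℝ) < _ := sgnU hx
      have s2 := (sgnB hy).1
      rw [heq] at s1; rw [s2] at s1; exact lt_irrefl 0 s1
    · exfalso
      have s1 : (0:ℝ) < _ := sgnU hx
      have s2 : _ < (0:ℝ) := sgnC hy
      rw [heq] at s1; linarith
    · exfalso
      have s1 : (0:ℝ) < _ := sgnU hy
      have s2 := (sgnB hx).1
      rw [← heq] at s1; rw [s2] at s1; exact lt_irrefl 0 s1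
    · exact hB.injOn hx hy heq
    · exfalso
      have s1 := (sgnB hx).1
      have s2 : _ < (0:ℝ) := sgnC hy
      rw [heq] at s1; rw [s1] at s2; exact lt_irrefl 0 s2
    · exfalso
      have s1 : (0:ℝ) < _ := sgnU hy
      have s2 : _ < (0:ℝ) := sgnC hx
      rw [← heq] at s1; linarith
    · exfalso
      have s1 := (sgnB hy).1
      have s2 : _ < (0:ℝ) := sgnC hx
      rw [← heq] at s1; rw [s1] at s2; exact lt_irrefl 0 s2
    · exact hC.injOn hx hy heq
  rw [hS]
  exact (hU.union hB (hinj.mono subset_union_left)).union hC hinj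

theorem stmt_13 (a : ℝ) (ha0 : 0 < a) (ha1 : a < 1)
    (f : ℂ → ℂ) (hf : ∀ w : ℂ, f w = Complex.sinh (a * w) * Complex.exp w)
    (ξa : ℝ) (hξa : ξa = (1 / (2 * a)) * Real.log ((1 - a) / (1 + a)))
    (xa : ℝ) (hxa : xa = -(a / (1 + a)) * ((1 - a) / (1 + a)) ^ ((1 - a) / (2 * a)))
    (Ω₀ : Set ℂ)
    (hΩ₀ : Ω₀ =
      {w : ℂ | 0 < w.im ∧ w.im < Real.pi / (1 + a) ∧
          Real.exp ((1 - a) * w.re) * Real.sin ((1 - a) * w.im) <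
            Real.exp ((1 + a) * w.re) * Real.sin ((1 + a) * w.im)} ∪
        {w : ℂ | w.im = 0 ∧ ξa < w.re} ∪
        {w : ℂ | -(Real.pi / (1 + a)) < w.im ∧ w.im < 0 ∧
          Real.exp ((1 + a) * w.re) * Real.sin ((1 + a) * w.im) <
            Real.exp ((1 - a) * w.re) * Real.sin ((1 - a) * w.im)}) :
    ∀ k : ℤ,
      Set.BijOn f ((fun w => w + Complex.I * (k * Real.pi / a)) '' Ω₀)
        ((fun z => Complex.exp (Complex.I * (k * Real.pi * (1 + a) / a)) * z) ''
          {z : ℂ | ¬ (z.im = 0 ∧ z.re ≤ xa)}) := by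
  intro k
  have ha0' : (a:ℂ) ≠ 0 := by exact_mod_cast ha0.ne'
  set c : ℂ := Complex.exp (Complex.I * ((k:ℂ) * (Real.pi:ℂ) * (1 + (a:ℂ)) / (a:ℂ))) with hc
  have hc0 : c ≠ 0 := Complex.exp_ne_zero _
  set s : ℂ := Complex.I * ((k:ℂ) * (Real.pi:ℂ) / (a:ℂ)) with hs
  have hmain : Set.BijOn f Ω₀ {z : ℂ | ¬ (z.im = 0 ∧ z.re ≤ xa)} := by
    rw [hΩ₀]
    exact (mainBij a ha0 ha1 ξa hξa xa hxa).congr (fun w _ => (hf w).symm)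
  have hfT : ∀ w : ℂ, f (w + s) = c * f w := by
    intro w
    rw [hf, hf]
    have hper : Complex.exp ((k:ℂ)*(2*(Real.pi:ℂ)*Complex.I)) = 1 :=
      Complex.exp_int_mul_two_pi_mul_I k
    have hEk : Complex.exp (-(Complex.I*((k:ℂ)*(Real.pi:ℂ))))
        = Complex.exp (Complex.I*((k:ℂ)*(Real.pi:ℂ))) := by
      rw [show -(Complex.I*((k:ℂ)*(Real.pi:ℂ)))
          = Complex.I*((k:ℂ)*(Real.pi:ℂ)) + -((k:ℂ)*(2*(Real.pi:ℂ)*Complex.I)) by ring,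
        Complex.exp_add, Complex.exp_neg, hper]
      simp
    have harg : (a:ℂ) * (w + s) = (a:ℂ)*w + Complex.I*((k:ℂ)*(Real.pi:ℂ)) := by
      rw [hs]; field_simp
    have hsinh : ∀ X : ℂ, Complex.sinh X = (Complex.exp X - Complex.exp (-X))/2 := fun X => rfl
    rw [harg, hsinh, hsinh]
    have e1 : Complex.exp ((a:ℂ)*w + Complex.I*((k:ℂ)*(Real.pi:ℂ)))
        = Complex.exp ((a:ℂ)*w) * Complex.exp (Complex.I*((k:ℂ)*(Real.pi:ℂ))) :=
      Complex.exp_add _ _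
    have e2 : Complex.exp (-((a:ℂ)*w + Complex.I*((k:ℂ)*(Real.pi:ℂ))))
        = Complex.exp (-((a:ℂ)*w)) * Complex.exp (-(Complex.I*((k:ℂ)*(Real.pi:ℂ)))) := by
      rw [← Complex.exp_add]; congr 1; ring
    have e3 : Complex.exp (w + s) = Complex.exp w * Complex.exp s := Complex.exp_add _ _
    have e4 : c = Complex.exp (Complex.I*((k:ℂ)*(Real.pi:ℂ))) * Complex.exp s := by
      rw [hc, hs, ← Complex.exp_add]
      congr 1
      field_simp
      ring
    rw [e1, e2, e3, e4, hEk]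
    ring
  have hcbij : Set.BijOn (fun z => c * z) {z : ℂ | ¬ (z.im = 0 ∧ z.re ≤ xa)}
      ((fun z => c * z) '' {z : ℂ | ¬ (z.im = 0 ∧ z.re ≤ xa)}) :=
    (mul_right_injective₀ hc0).injOn.bijOn_image
  have h1 : Set.BijOn ((fun z => c * z) ∘ f) Ω₀
      ((fun z => c * z) '' {z : ℂ | ¬ (z.im = 0 ∧ z.re ≤ xa)}) := hcbij.comp hmain
  have h2 : Set.BijOn (fun w => f (w + s)) Ω₀
      ((fun z => c * z) '' {z : ℂ | ¬ (z.im = 0 ∧ z.re ≤ xa)}) :=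
    h1.congr (fun w _ => (hfT w).symm)
  have hTinv : Set.BijOn (fun w => w - s) ((fun w => w + s) '' Ω₀) Ω₀ := by
    refine ⟨?_, ?_, ?_⟩
    · rintro x ⟨w, hw, rfl⟩; simpa using hw
    · intro x _ y _ h; simpa using h
    · intro w hw; exact ⟨w + s, ⟨w, hw, rfl⟩, by simp⟩
  have final := h2.comp hTinv
  exact final.congr (fun x hx => by simp only [Function.comp]; congr 1; ring)
end

section
/- Let b ∈ ℝ. If sin((1+a)b) = 0 and sin((1−a)b) ≠ 0, then Ξ(η) → +∞ as η → b within dom(Ξ). If instead sin((1−a)b) = 0 and sin((1+a)b) ≠ 0, then Ξ(η) → −∞ as η → b within dom(Ξ). -/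
open Real Filter Topology

theorem stmt_16 (a : ℝ) (ha0 : 0 < a) (ha1 : a < 1)
    (Ξ : ℝ → ℝ)
    (hΞ : ∀ η : ℝ, Ξ η = (1 / (2 * a)) * Real.log (Real.sin ((1 - a) * η) / Real.sin ((1 + a) * η)))
    (domΞ : Set ℝ)
    (hdom : domΞ = {η : ℝ | 0 < Real.sin ((1 - a) * η) / Real.sin ((1 + a) * η)})
    (b : ℝ) :
    (Real.sin ((1 + a) * b) = 0 → Real.sin ((1 - a) * b) ≠ 0 →
        Filter.Tendsto Ξ (nhdsWithin b domΞ) Filter.atTop) ∧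
      (Real.sin ((1 - a) * b) = 0 → Real.sin ((1 + a) * b) ≠ 0 →
        Filter.Tendsto Ξ (nhdsWithin b domΞ) Filter.atBot) := by
  set f : ℝ → ℝ := fun η => Real.sin ((1 - a) * η)
  set g : ℝ → ℝ := fun η => Real.sin ((1 + a) * η)
  have hc : (0:ℝ) < 1 / (2 * a) := by positivity
  have hcontf : Continuous f := (Real.continuous_sin.comp (continuous_const.mul continuous_id))
  have hcontg : Continuous g := (Real.continuous_sin.comp (continuous_const.mul continuous_id))
  have hmem : ∀ᶠ η in 𝓝[domΞ] b, 0 < f η / g η := by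
    filter_upwards [self_mem_nhdsWithin] with η hη
    rw [hdom] at hη; exact hη
  have hΞeq : Ξ = fun η => (1 / (2 * a)) * Real.log (f η / g η) := funext hΞ
  constructor
  · intro hg0 hf0
    -- f/g → +∞ within dom
    have habsf : Tendsto (fun η => |f η|) (𝓝[domΞ] b) (𝓝 |f b|) :=
      ((hcontf.abs.tendsto b).mono_left nhdsWithin_le_nhds)
    have habsg : Tendsto (fun η => |g η|) (𝓝[domΞ] b) (𝓝[>] 0) := by
      rw [tendsto_nhdsWithin_iff]
      constructor
      · have := (hcontg.abs.tendsto b).mono_left (nhdsWithin_le_nhds (s := domΞ))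
        simpa [g, hg0] using this
      · filter_upwards [hmem] with η hη
        have : g η ≠ 0 := by
          intro h
          rw [h, div_zero] at hη; exact lt_irrefl 0 hη
        exact abs_pos.mpr this
    have hinv : Tendsto (fun η => |g η|)⁻¹ (𝓝[domΞ] b) atTop := habsg.inv_tendsto_nhdsGT_zero
    have hmul : Tendsto (fun η => |f η| * (|g η|)⁻¹) (𝓝[domΞ] b) atTop :=
      Filter.Tendsto.pos_mul_atTop (abs_pos.mpr hf0) habsf hinv
    have hdiv : Tendsto (fun η => f η / g η) (𝓝[domΞ] b) atTop := by
      refine hmul.congr' ?_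
      filter_upwards [hmem] with η hη
      rw [← abs_inv, ← abs_mul, ← div_eq_mul_inv, abs_of_pos hη]
    rw [hΞeq]
    exact (Real.tendsto_log_atTop.comp hdiv).const_mul_atTop hc
  · intro hf0 hg0
    have hdiv : Tendsto (fun η => f η / g η) (𝓝[domΞ] b) (𝓝[>] 0) := by
      rw [tendsto_nhdsWithin_iff]
      constructor
      · have : Tendsto (fun η => f η / g η) (𝓝 b) (𝓝 (f b / g b)) :=
          (hcontf.tendsto b).div (hcontg.tendsto b) hg0
        simpa [f, hf0] using this.mono_left nhdsWithin_le_nhds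
      · exact hmem
    rw [hΞeq]
    have := Real.tendsto_log_nhdsGT_zero.comp hdiv
    exact (tendsto_const_mul_atBot_of_pos hc).mpr this
end

section
/- Let a = 1/3, so f(w) = sinh(w/3)·e^{w}. For every z ∈ ℂ: if u = 1/2 + (2z + 1/4)^{1/2} ≠ 0 (principal square root) and w = (3/2)·Log(u) (principal logarithm), then f(w) = z; and if ũ = 1/2 − (2z + 1/4)^{1/2} ≠ 0 and w̃ = (3/2)·Log(ũ), then f(w̃) = z. (These are the two explicit branches ψ(z) = (3/2)·log(1/2 + √(2z+1/4)) and ψ̃(z) = (3/2)·log(1/2 − √(2z+1/4)) of the inverse of f.) -/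
open Complex

lemma key_17 (u : ℂ) (hu : u ≠ 0) :
    Complex.sinh ((3 / 2 * Complex.log u) / 3) * Complex.exp (3 / 2 * Complex.log u)
      = (u ^ 2 - u) / 2 := by
  set t := Complex.exp ((1 / 2) * Complex.log u) with ht
  have ht0 : t ≠ 0 := Complex.exp_ne_zero _
  have ht2 : t ^ 2 = u := by
    rw [ht, ← Complex.exp_nat_mul]
    have : (2:ℕ) * (1 / 2 * Complex.log u) = Complex.log u := by push_cast; ring
    rw [this, Complex.exp_log hu]
  have h3 : Complex.exp (3 / 2 * Complex.log u) = t ^ 3 := by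
    rw [ht, ← Complex.exp_nat_mul]; ring_nf
  have hneg : Complex.exp (-((1 / 2) * Complex.log u)) = t⁻¹ := by
    rw [ht, ← Complex.exp_neg]
  have harg : (3 / 2 * Complex.log u) / 3 = (1 / 2) * Complex.log u := by ring
  rw [harg, Complex.sinh, hneg, h3, ← ht, ← ht2]
  field_simp

theorem stmt_17
    (f : ℂ → ℂ) (hf : ∀ w : ℂ, f w = Complex.sinh (w / 3) * Complex.exp w) :
    ∀ z : ℂ,
      ((1 / 2 + (2 * z + 1 / 4) ^ ((1 : ℂ) / 2) ≠ 0 →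
          f ((3 / 2) * Complex.log (1 / 2 + (2 * z + 1 / 4) ^ ((1 : ℂ) / 2))) = z) ∧
        (1 / 2 - (2 * z + 1 / 4) ^ ((1 : ℂ) / 2) ≠ 0 →
          f ((3 / 2) * Complex.log (1 / 2 - (2 * z + 1 / 4) ^ ((1 : ℂ) / 2))) = z)) := by
  intro z
  set s := (2 * z + 1 / 4) ^ ((1 : ℂ) / 2) with hsdef
  have hs : s * s = 2 * z + 1 / 4 := by
    by_cases h : (2 * z + 1 / 4) = 0
    · have : s = 0 := by rw [hsdef, h, Complex.zero_cpow (by norm_num : (1 : ℂ) / 2 ≠ 0)]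
      rw [this, h]; ring
    · rw [hsdef, ← Complex.cpow_add _ _ h]
      norm_num
  constructor
  · intro hu
    rw [hf, key_17 _ hu]
    have : (1 / 2 + s) ^ 2 - (1 / 2 + s) = s * s - 1 / 4 := by ring
    rw [this, hs]; ring
  · intro hu
    rw [hf, key_17 _ hu]
    have : (1 / 2 - s) ^ 2 - (1 / 2 - s) = s * s - 1 / 4 := by ring
    rw [this, hs]; ring
end
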